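/- arXiv:1312.6530 — 3 statements merged into one kernel-verified Lean document; each statement's English description precedes it below -/
import Mathlib

section
/- If Re(c − a − b) > 0 and c is not a nonpositive integer, then the hypergeometric series at z = 1 converges and ₂F₁(a,b;c;1) = Γ(c)Γ(c−a−b)/(Γ(c−a)Γ(c−b)). -/
open Complex

/-- The `k`-th term of the Gauss hypergeometric series `₂F₁(a, b; c; z)`. -/
noncomputable def hypTerm (a b c z : ℂ) (k : ℕ) : ℂ :=
  ((ascPochhammer ℂ k).eval a * (ascPochhammer ℂ k).eval b /
    ((ascPochhammer ℂ k).eval c * (k.factorial : ℂ))) * z ^ k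

section GaussAux

open Filter Polynomial Finset Topology

noncomputable def GA (a b c : ℂ) (k : ℕ) : ℂ :=
  (ascPochhammer ℂ k).eval a * (ascPochhammer ℂ k).eval b /
    ((ascPochhammer ℂ k).eval c * (k.factorial : ℂ))

lemma pochEval_prod (s : ℂ) (n : ℕ) :
    (ascPochhammer ℂ n).eval s = ∏ j ∈ Finset.range n, (s + j) := by
  induction n with
  | zero => simp
  | succ n ih => rw [ascPochhammer_succ_eval, ih, Finset.prod_range_succ]

lemma poch_ne_zero {s : ℂ} (hs : ∀ j : ℕ, s ≠ -(j : ℂ)) (k : ℕ) :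
    (ascPochhammer ℂ k).eval s ≠ 0 := by
  simp only [ne_eq, ascPochhammer_eval_eq_zero_iff, not_exists]
  intro j hj
  exact hs j (by linear_combination hj.2)

lemma ne_neg_nat_of_poch {s : ℂ} (hs : ∀ k, (ascPochhammer ℂ k).eval s ≠ 0) (m : ℕ) :
    s ≠ -(m : ℂ) := by
  intro h
  exact hs (m + 1) (by rw [ascPochhammer_eval_eq_zero_iff]; exact ⟨m, by omega, by rw [h]; ring⟩)

lemma gammaSeq_mul {s : ℂ} {n : ℕ} (hs : (ascPochhammer ℂ (n + 1)).eval s ≠ 0) :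
    Complex.GammaSeq s n * (ascPochhammer ℂ (n + 1)).eval s = (n : ℂ) ^ s * n.factorial := by
  rw [Complex.GammaSeq, ← pochEval_prod, div_mul_cancel₀ _ hs]

lemma gammaSeq_ne_zero {s : ℂ} {n : ℕ} (hn : 1 ≤ n) (hs : (ascPochhammer ℂ (n + 1)).eval s ≠ 0) :
    Complex.GammaSeq s n ≠ 0 := by
  intro h
  have := gammaSeq_mul hs
  rw [h, zero_mul] at this
  have hn0 : (n : ℂ) ≠ 0 := Nat.cast_ne_zero.2 (by omega)
  exact (mul_ne_zero (by simp [Complex.cpow_eq_zero_iff, hn0])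
    (Nat.cast_ne_zero.2 n.factorial_ne_zero : (n.factorial : ℂ) ≠ 0)) this.symm

lemma poch_eq_gammaSeq {s : ℂ} {n : ℕ} (hn : 1 ≤ n) (hs : (ascPochhammer ℂ (n + 1)).eval s ≠ 0) :
    (ascPochhammer ℂ n).eval s =
      (n : ℂ) ^ s * n.factorial / (Complex.GammaSeq s n * (s + n)) := by
  have h1 := gammaSeq_mul hs
  rw [ascPochhammer_succ_eval] at h1 hs
  have h2 : Complex.GammaSeq s n * (s + n) ≠ 0 :=
    mul_ne_zero (gammaSeq_ne_zero hn (by rw [ascPochhammer_succ_eval]; exact hs))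
      (right_ne_zero_of_mul hs)
  rw [eq_div_iff h2]
  linear_combination h1

lemma tendsto_inv_nat_complex : Tendsto (fun n : ℕ => ((n : ℂ))⁻¹) atTop (𝓝 0) := by
  rw [tendsto_zero_iff_norm_tendsto_zero]
  simp only [norm_inv, Complex.norm_natCast]
  exact tendsto_inv_atTop_nhds_zero_nat

lemma tendsto_add_div_add (x y : ℂ) :
    Tendsto (fun n : ℕ => (x + n) / (y + n)) atTop (𝓝 1) := by
  have hx : Tendsto (fun n : ℕ => x * ((n : ℂ))⁻¹ + 1) atTop (𝓝 1) := by
    have := (tendsto_inv_nat_complex.const_mul x).add_const 1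
    simpa using this
  have hy : Tendsto (fun n : ℕ => y * ((n : ℂ))⁻¹ + 1) atTop (𝓝 1) := by
    have := (tendsto_inv_nat_complex.const_mul y).add_const 1
    simpa using this
  have := hx.div hy one_ne_zero
  rw [div_one] at this
  apply this.congr'
  have hyn : ∀ᶠ n : ℕ in atTop, y + (n : ℂ) ≠ 0 := by
    filter_upwards [eventually_gt_atTop ⌈‖y‖⌉₊] with n hn h0
    have hy' : y = -(n : ℂ) := by linear_combination h0
    have h1 : ‖y‖ = (n : ℝ) := by rw [hy']; simp
    have h2 : ‖y‖ < (n : ℝ) := Nat.lt_of_ceil_lt hn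
    linarith
  filter_upwards [eventually_ge_atTop 1, hyn] with n hn hyn'
  have hn0 : (n : ℂ) ≠ 0 := Nat.cast_ne_zero.2 (by omega)
  simp only [Pi.div_apply]
  field_simp

noncomputable def Wseq (a b c : ℂ) (n : ℕ) : ℂ :=
  Complex.GammaSeq c n * ((c + n) * n / ((a + n) * (b + n))) /
    (Complex.GammaSeq a n * Complex.GammaSeq b n)

lemma GA_eq (a b c : ℂ) (hA : ∀ k, (ascPochhammer ℂ k).eval a ≠ 0)
    (hB : ∀ k, (ascPochhammer ℂ k).eval b ≠ 0)
    (hC : ∀ k, (ascPochhammer ℂ k).eval c ≠ 0) {n : ℕ} (hn : 1 ≤ n) :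
    (n : ℂ) * GA a b c n = (n : ℂ) ^ (a + b - c) * Wseq a b c n := by
  have hn0 : (n : ℂ) ≠ 0 := Nat.cast_ne_zero.2 (by omega)
  have hfac : (n.factorial : ℂ) ≠ 0 := Nat.cast_ne_zero.2 n.factorial_ne_zero
  have han : a + n ≠ 0 := by
    have := hA (n + 1); rw [ascPochhammer_succ_eval] at this; exact right_ne_zero_of_mul this
  have hbn : b + n ≠ 0 := by
    have := hB (n + 1); rw [ascPochhammer_succ_eval] at this; exact right_ne_zero_of_mul this
  have hcn : c + n ≠ 0 := by
    have := hC (n + 1); rw [ascPochhammer_succ_eval] at this; exact right_ne_zero_of_mul this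
  have hGa := gammaSeq_ne_zero hn (hA (n + 1))
  have hGb := gammaSeq_ne_zero hn (hB (n + 1))
  have hGc := gammaSeq_ne_zero hn (hC (n + 1))
  have hpow : (n : ℂ) ^ (a + b - c) = (n : ℂ) ^ a * (n : ℂ) ^ b / (n : ℂ) ^ c := by
    rw [Complex.cpow_sub _ _ hn0, Complex.cpow_add _ _ hn0]
  have hca : (n : ℂ) ^ a ≠ 0 := by simp [Complex.cpow_eq_zero_iff, hn0]
  have hcb : (n : ℂ) ^ b ≠ 0 := by simp [Complex.cpow_eq_zero_iff, hn0]
  have hcc : (n : ℂ) ^ c ≠ 0 := by simp [Complex.cpow_eq_zero_iff, hn0]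
  rw [GA, Wseq, poch_eq_gammaSeq hn (hA (n+1)), poch_eq_gammaSeq hn (hB (n+1)),
    poch_eq_gammaSeq hn (hC (n+1)), hpow]
  field_simp

lemma Wseq_tendsto (a b c : ℂ) (hA : ∀ k, (ascPochhammer ℂ k).eval a ≠ 0)
    (hB : ∀ k, (ascPochhammer ℂ k).eval b ≠ 0) :
    Tendsto (Wseq a b c) atTop
      (𝓝 (Complex.Gamma c * 1 / (Complex.Gamma a * Complex.Gamma b))) := by
  have hq : Tendsto (fun n : ℕ => (c + n) * n / ((a + n) * (b + n))) atTop (𝓝 1) := by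
    have h1 := (tendsto_add_div_add c a).mul (tendsto_add_div_add 0 b)
    rw [one_mul] at h1
    apply h1.congr
    intro n
    rw [zero_add, div_mul_div_comm]
  exact ((Complex.GammaSeq_tendsto_Gamma c).mul hq).div
    ((Complex.GammaSeq_tendsto_Gamma a).mul (Complex.GammaSeq_tendsto_Gamma b))
    (mul_ne_zero (Complex.Gamma_ne_zero (ne_neg_nat_of_poch hA))
      (Complex.Gamma_ne_zero (ne_neg_nat_of_poch hB)))

lemma exists_bound_of_eventually_zero (f : ℕ → ℂ) (r : ℝ) (m : ℕ)
    (hf : ∀ k, m ≤ k → f k = 0) :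
    ∃ C : ℝ, 0 ≤ C ∧ ∀ k : ℕ, 1 ≤ k → ‖f k‖ ≤ C * (k : ℝ) ^ r := by
  refine ⟨∑ k ∈ Finset.range m, ‖f k‖ * (k : ℝ) ^ (-r),
    Finset.sum_nonneg (fun k _ => by positivity), fun k hk => ?_⟩
  have hk0 : (0 : ℝ) < (k : ℝ) := by exact_mod_cast hk
  rcases le_or_gt m k with h | h
  · rw [hf k h, norm_zero]
    have : 0 ≤ ∑ k ∈ Finset.range m, ‖f k‖ * (k : ℝ) ^ (-r) :=
      Finset.sum_nonneg (fun k _ => by positivity)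
    positivity
  · calc ‖f k‖ = (‖f k‖ * (k : ℝ) ^ (-r)) * (k : ℝ) ^ r := by
          rw [mul_assoc, ← Real.rpow_add hk0, neg_add_cancel, Real.rpow_zero, mul_one]
    _ ≤ _ := by
        refine mul_le_mul_of_nonneg_right ?_ (by positivity)
        exact Finset.single_le_sum (f := fun i => ‖f i‖ * (i : ℝ) ^ (-r))
          (fun i _ => by positivity) (Finset.mem_range.2 h)

lemma norm_GA_le (a b c : ℂ) (hC : ∀ k, (ascPochhammer ℂ k).eval c ≠ 0) :
    ∃ C : ℝ, 0 ≤ C ∧ ∀ k : ℕ, 1 ≤ k →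
      ‖GA a b c k‖ ≤ C * (k : ℝ) ^ ((a + b - c).re - 1) := by
  by_cases hA : ∃ m : ℕ, a = -(m : ℂ)
  · obtain ⟨m, rfl⟩ := hA
    refine exists_bound_of_eventually_zero _ _ (m + 1) (fun k hk => ?_)
    have : (ascPochhammer ℂ k).eval (-(m : ℂ)) = 0 :=
      ascPochhammer_eval_neg_coe_nat_of_lt (by omega)
    simp [GA, this]
  by_cases hB : ∃ m : ℕ, b = -(m : ℂ)
  · obtain ⟨m, rfl⟩ := hB
    refine exists_bound_of_eventually_zero _ _ (m + 1) (fun k hk => ?_)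
    have : (ascPochhammer ℂ k).eval (-(m : ℂ)) = 0 :=
      ascPochhammer_eval_neg_coe_nat_of_lt (by omega)
    simp [GA, this]
  push_neg at hA hB
  have hA' : ∀ k, (ascPochhammer ℂ k).eval a ≠ 0 := poch_ne_zero hA
  have hB' : ∀ k, (ascPochhammer ℂ k).eval b ≠ 0 := poch_ne_zero hB
  obtain ⟨C, hCub⟩ := (Wseq_tendsto a b c hA' hB').norm.bddAbove_range
  have hC0 : 0 ≤ C := le_trans (norm_nonneg _) (hCub (Set.mem_range_self 0))
  refine ⟨C, hC0, fun k hk => ?_⟩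
  have hk0 : (0 : ℝ) < (k : ℝ) := by exact_mod_cast hk
  have hid : (k : ℝ) * ‖GA a b c k‖ = (k : ℝ) ^ ((a + b - c).re) * ‖Wseq a b c k‖ := by
    have h1 := congrArg norm (GA_eq a b c hA' hB' hC hk)
    rw [norm_mul, norm_mul, Complex.norm_natCast] at h1
    rw [show ((k : ℕ) : ℂ) = (((k : ℕ) : ℝ) : ℂ) by push_cast; ring] at h1
    rwa [Complex.norm_cpow_eq_rpow_re_of_pos hk0] at h1
  have hw : ‖Wseq a b c k‖ ≤ C := hCub (Set.mem_range_self k)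
  have hrw : (k : ℝ) ^ ((a + b - c).re - 1) = (k : ℝ) ^ ((a + b - c).re) / (k : ℝ) := by
    rw [Real.rpow_sub hk0, Real.rpow_one]
  rw [hrw, mul_div_assoc', le_div_iff₀ hk0]
  calc ‖GA a b c k‖ * (k : ℝ) = (k : ℝ) * ‖GA a b c k‖ := by ring
  _ = (k : ℝ) ^ ((a + b - c).re) * ‖Wseq a b c k‖ := hid
  _ ≤ (k : ℝ) ^ ((a + b - c).re) * C := by
      exact mul_le_mul_of_nonneg_left hw (by positivity)
  _ = C * (k : ℝ) ^ ((a + b - c).re) := by ring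

lemma re_abc {a b c : ℂ} (h : 0 < (c - a - b).re) : (a + b - c).re < 0 := by
  have : (a + b - c) = -(c - a - b) := by ring
  rw [this, Complex.neg_re]; linarith

lemma summable_norm_GA (a b c : ℂ) (hC : ∀ k, (ascPochhammer ℂ k).eval c ≠ 0)
    (h : 0 < (c - a - b).re) : Summable (fun k => ‖GA a b c k‖) := by
  obtain ⟨C, hC0, hbd⟩ := norm_GA_le a b c hC
  have hr : (a + b - c).re - 1 < -1 := by have := re_abc h; linarith
  have hsum : Summable (fun k : ℕ => C * (k : ℝ) ^ ((a + b - c).re - 1)) :=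
    (Real.summable_nat_rpow.2 hr).mul_left C
  rw [← summable_nat_add_iff 1]
  refine Summable.of_nonneg_of_le (fun k => norm_nonneg _)
    (fun k => hbd (k + 1) (by omega)) ?_
  exact (summable_nat_add_iff 1).2 hsum

lemma summable_GA (a b c : ℂ) (hC : ∀ k, (ascPochhammer ℂ k).eval c ≠ 0)
    (h : 0 < (c - a - b).re) : Summable (GA a b c) :=
  (summable_norm_GA a b c hC h).of_norm

lemma tendsto_nat_mul_GA (a b c : ℂ) (hC : ∀ k, (ascPochhammer ℂ k).eval c ≠ 0)
    (h : 0 < (c - a - b).re) :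
    Tendsto (fun k : ℕ => (k : ℂ) * GA a b c k) atTop (𝓝 0) := by
  obtain ⟨C, hC0, hbd⟩ := norm_GA_le a b c hC
  set r := (a + b - c).re with hr
  have hrneg : r < 0 := re_abc h
  have hg : Tendsto (fun k : ℕ => C * (k : ℝ) ^ r) atTop (𝓝 0) := by
    have h1 : Tendsto (fun x : ℝ => x ^ r) atTop (𝓝 0) := by
      simpa using tendsto_rpow_neg_atTop (by linarith : (0 : ℝ) < -r)
    have := (h1.comp tendsto_natCast_atTop_atTop).const_mul C
    simpa using this
  apply squeeze_zero_norm' _ hg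
  filter_upwards [eventually_ge_atTop 1] with k hk
  have hk0 : (0 : ℝ) < (k : ℝ) := by exact_mod_cast hk
  rw [norm_mul, Complex.norm_natCast]
  calc (k : ℝ) * ‖GA a b c k‖ ≤ (k : ℝ) * (C * (k : ℝ) ^ (r - 1)) :=
        mul_le_mul_of_nonneg_left (hbd k hk) (by positivity)
  _ = C * (k : ℝ) ^ r := by
      rw [Real.rpow_sub hk0, Real.rpow_one]; field_simp

lemma step_relation (a b c : ℂ) (h : 0 < (c - a - b).re) (hc : ∀ k : ℕ, c ≠ -(k : ℂ)) :
    ∑' k, GA a b c k = ((c - a) * (c - b) / (c * (c - a - b))) * ∑' k, GA a b (c + 1) k := by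
  have hc1 : ∀ k : ℕ, c + 1 ≠ -(k : ℂ) := fun k hk =>
    hc (k + 1) (by push_cast; linear_combination hk)
  have hPc : ∀ k, (ascPochhammer ℂ k).eval c ≠ 0 := poch_ne_zero hc
  have hPc1 : ∀ k, (ascPochhammer ℂ k).eval (c + 1) ≠ 0 := poch_ne_zero hc1
  have h1 : 0 < (c + 1 - a - b).re := by
    have e : c + 1 - a - b = (c - a - b) + 1 := by ring
    rw [e, Complex.add_re, Complex.one_re]; linarith
  have hcne : c ≠ 0 := by simpa using hc 0
  have hcab : c - a - b ≠ 0 := fun H => by rw [H] at h; simp at h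
  set t : ℕ → ℂ := fun k =>
    c * (c - a - b) * GA a b c k - (c - a) * (c - b) * GA a b (c + 1) k with ht_def
  set u : ℕ → ℂ := fun k => c * k * GA a b c k with hu_def
  have htu : ∀ k, t k = u k - u (k + 1) := by
    intro k
    have hck : c + (k : ℂ) ≠ 0 := fun hk => hc k (by linear_combination hk)
    have e1 : (ascPochhammer ℂ (k + 1)).eval c = c * (ascPochhammer ℂ k).eval (c + 1) := by
      rw [ascPochhammer_succ_left]
      simp [eval_comp]
    have e2 : (ascPochhammer ℂ k).eval (c + 1) =
        (ascPochhammer ℂ k).eval c * (c + k) / c := by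
      rw [eq_div_iff hcne]
      rw [ascPochhammer_succ_eval] at e1
      linear_combination -e1
    have hfac : ((k.factorial : ℂ)) ≠ 0 := Nat.cast_ne_zero.2 k.factorial_ne_zero
    have hk1 : ((k : ℂ) + 1) ≠ 0 := by
      intro hk
      have : ((k : ℂ) + 1) = ((k + 1 : ℕ) : ℂ) := by push_cast; ring
      rw [this] at hk
      exact Nat.cast_ne_zero.2 (Nat.succ_ne_zero k) hk
    simp only [ht_def, hu_def, GA, ascPochhammer_succ_eval, e2, Nat.factorial_succ,
      Nat.cast_mul, Nat.cast_add, Nat.cast_one]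
    have hZ := hPc k
    field_simp
    ring
  have hsum_c := summable_GA a b c hPc h
  have hsum_c1 := summable_GA a b (c + 1) hPc1 h1
  have ht : Summable t := (hsum_c.mul_left _).sub (hsum_c1.mul_left _)
  have hps : ∀ n, ∑ i ∈ Finset.range n, t i = -(u n) := by
    intro n
    have : ∀ i ∈ Finset.range n, t i = u i - u (i + 1) := fun i _ => htu i
    rw [Finset.sum_congr rfl this, Finset.sum_range_sub']
    simp [hu_def]
  have hu0 : Tendsto u atTop (𝓝 0) := by
    have := (tendsto_nat_mul_GA a b c hPc h).const_mul c
    rw [mul_zero] at this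
    apply this.congr
    intro n
    simp [hu_def]; ring
  have h0 : Tendsto (fun n => ∑ i ∈ Finset.range n, t i) atTop (𝓝 0) := by
    have := hu0.neg
    rw [neg_zero] at this
    exact this.congr fun n => (hps n).symm
  have hts : ∑' k, t k = 0 := tendsto_nhds_unique ht.hasSum.tendsto_sum_nat h0
  rw [ht_def] at hts
  rw [Summable.tsum_sub (hsum_c.mul_left _) (hsum_c1.mul_left _), tsum_mul_left, tsum_mul_left] at hts
  have hden : c * (c - a - b) ≠ 0 := mul_ne_zero hcne hcab
  field_simp
  linear_combination hts

lemma shift_re {a b c : ℂ} (h : 0 < (c - a - b).re) (n : ℕ) :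
    0 < (c + n - a - b).re := by
  have e : c + (n : ℂ) - a - b = (c - a - b) + (n : ℕ) := by ring
  rw [e, Complex.add_re, Complex.natCast_re]
  have : (0 : ℝ) ≤ (n : ℝ) := Nat.cast_nonneg n
  linarith

lemma shift_ne {c : ℂ} (hc : ∀ k : ℕ, c ≠ -(k : ℂ)) (n : ℕ) (k : ℕ) :
    c + (n : ℂ) ≠ -(k : ℂ) := by
  intro hk
  exact hc (n + k) (by push_cast; linear_combination hk)

lemma iterate_relation (a b c : ℂ) (h : 0 < (c - a - b).re) (hc : ∀ k : ℕ, c ≠ -(k : ℂ))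
    (n : ℕ) :
    ∑' k, GA a b c k =
      (∏ j ∈ Finset.range n, ((c - a + j) * (c - b + j) / ((c + j) * (c - a - b + j)))) *
        ∑' k, GA a b (c + n) k := by
  induction n with
  | zero => simp
  | succ n ih =>
    rw [ih, Finset.prod_range_succ, mul_assoc]
    congr 1
    have hstep := step_relation a b (c + n) (shift_re h n) (shift_ne hc n)
    have e : (c + (n : ℂ)) + 1 = c + ((n + 1 : ℕ) : ℂ) := by push_cast; ring
    rw [e] at hstep
    rw [hstep]
    congr 1
    ring

lemma prod_eq_poch (x y z w : ℂ) (n : ℕ) :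
    ∏ j ∈ Finset.range n, ((x + j) * (y + j) / ((z + j) * (w + j))) =
      (ascPochhammer ℂ n).eval x * (ascPochhammer ℂ n).eval y /
        ((ascPochhammer ℂ n).eval z * (ascPochhammer ℂ n).eval w) := by
  simp [pochEval_prod, Finset.prod_div_distrib, Finset.prod_mul_distrib]

lemma aux_ratio (x1 x2 x3 x4 ge gf gc gd en fn cn dn fac : ℂ)
    (hge : ge ≠ 0) (hgf : gf ≠ 0)
    (hen : en ≠ 0) (hfn : fn ≠ 0)
    (hx3 : x3 ≠ 0) (hx4 : x4 ≠ 0) (hfac : fac ≠ 0)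
    (hx : x1 * x2 = x3 * x4) :
    x1 * fac / (ge * en) * (x2 * fac / (gf * fn)) /
      (x3 * fac / (gc * cn) * (x4 * fac / (gd * dn))) =
      gc * gd * (cn / en * (dn / fn)) / (ge * gf) := by
  have e1 : x1 * fac / (ge * en) * (x2 * fac / (gf * fn)) =
      x3 * x4 * fac ^ 2 / (ge * en * (gf * fn)) := by
    rw [div_mul_div_comm]; congr 1; rw [← hx]; ring
  have e2 : x3 * fac / (gc * cn) * (x4 * fac / (gd * dn)) =
      x3 * x4 * fac ^ 2 / (gc * cn * (gd * dn)) := by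
    rw [div_mul_div_comm]; congr 1; ring
  rw [e1, e2, div_div_div_eq, mul_comm (ge * en * (gf * fn)) _,
    mul_div_mul_left _ _ (by exact mul_ne_zero (mul_ne_zero hx3 hx4) (pow_ne_zero 2 hfac))]
  field_simp

set_option maxHeartbeats 1600000 in
lemma prod_ratio_tendsto (a b c : ℂ) (h : 0 < (c - a - b).re) (hc : ∀ k : ℕ, c ≠ -(k : ℂ)) :
    Tendsto (fun n => ∏ j ∈ Finset.range n,
        ((c - a + j) * (c - b + j) / ((c + j) * (c - a - b + j)))) atTop
      (𝓝 (Complex.Gamma c * Complex.Gamma (c - a - b) /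
        (Complex.Gamma (c - a) * Complex.Gamma (c - b)))) := by
  have hcd : ∀ k : ℕ, c - a - b ≠ -(k : ℂ) := by
    intro k hk
    rw [hk] at h
    simp only [Complex.neg_re, Complex.natCast_re] at h
    have : (0 : ℝ) ≤ (k : ℝ) := Nat.cast_nonneg k
    linarith
  by_cases hea : ∃ m : ℕ, c - a = -(m : ℂ)
  · obtain ⟨m, hm⟩ := hea
    have hΓ : Complex.Gamma (c - a) = 0 := by rw [hm]; exact Complex.Gamma_neg_nat_eq_zero m
    rw [hΓ, zero_mul, div_zero]
    apply Filter.Tendsto.congr' _ tendsto_const_nhds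
    filter_upwards [eventually_ge_atTop (m + 1)] with n hn
    rw [prod_eq_poch, hm, ascPochhammer_eval_neg_coe_nat_of_lt (by omega)]
    simp
  by_cases heb : ∃ m : ℕ, c - b = -(m : ℂ)
  · obtain ⟨m, hm⟩ := heb
    have hΓ : Complex.Gamma (c - b) = 0 := by rw [hm]; exact Complex.Gamma_neg_nat_eq_zero m
    rw [hΓ, mul_zero, div_zero]
    apply Filter.Tendsto.congr' _ tendsto_const_nhds
    filter_upwards [eventually_ge_atTop (m + 1)] with n hn
    rw [prod_eq_poch, hm, ascPochhammer_eval_neg_coe_nat_of_lt (by omega)]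
    simp
  push_neg at hea heb
  have hPe : ∀ k, (ascPochhammer ℂ k).eval (c - a) ≠ 0 := poch_ne_zero hea
  have hPf : ∀ k, (ascPochhammer ℂ k).eval (c - b) ≠ 0 := poch_ne_zero heb
  have hPc : ∀ k, (ascPochhammer ℂ k).eval c ≠ 0 := poch_ne_zero hc
  have hPd : ∀ k, (ascPochhammer ℂ k).eval (c - a - b) ≠ 0 := poch_ne_zero hcd
  have hΓe : Complex.Gamma (c - a) ≠ 0 := Complex.Gamma_ne_zero hea
  have hΓf : Complex.Gamma (c - b) ≠ 0 := Complex.Gamma_ne_zero heb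
  have hlim := (((Complex.GammaSeq_tendsto_Gamma c).mul
      (Complex.GammaSeq_tendsto_Gamma (c - a - b))).mul
      ((tendsto_add_div_add c (c - a)).mul (tendsto_add_div_add (c - a - b) (c - b)))).div
      ((Complex.GammaSeq_tendsto_Gamma (c - a)).mul (Complex.GammaSeq_tendsto_Gamma (c - b)))
      (mul_ne_zero hΓe hΓf)
  rw [show Complex.Gamma c * Complex.Gamma (c - a - b) * (1 * 1) /
      (Complex.Gamma (c - a) * Complex.Gamma (c - b)) =
      Complex.Gamma c * Complex.Gamma (c - a - b) /
      (Complex.Gamma (c - a) * Complex.Gamma (c - b)) by ring] at hlim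
  apply hlim.congr'
  filter_upwards [eventually_ge_atTop 1] with n hn
  have hn0 : (n : ℂ) ≠ 0 := Nat.cast_ne_zero.2 (by omega)
  have hfac : ((n.factorial : ℂ)) ≠ 0 := Nat.cast_ne_zero.2 n.factorial_ne_zero
  have hGe := gammaSeq_ne_zero hn (hPe (n + 1))
  have hGf := gammaSeq_ne_zero hn (hPf (n + 1))
  have hGc := gammaSeq_ne_zero hn (hPc (n + 1))
  have hGd := gammaSeq_ne_zero hn (hPd (n + 1))
  have hen : c - a + n ≠ 0 := by
    have := hPe (n + 1); rw [ascPochhammer_succ_eval] at this; exact right_ne_zero_of_mul this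
  have hfn : c - b + n ≠ 0 := by
    have := hPf (n + 1); rw [ascPochhammer_succ_eval] at this; exact right_ne_zero_of_mul this
  have hcn : c + n ≠ 0 := by
    have := hPc (n + 1); rw [ascPochhammer_succ_eval] at this; exact right_ne_zero_of_mul this
  have hdn : c - a - b + n ≠ 0 := by
    have := hPd (n + 1); rw [ascPochhammer_succ_eval] at this; exact right_ne_zero_of_mul this
  have hpc : (n : ℂ) ^ c ≠ 0 := by simp [Complex.cpow_eq_zero_iff, hn0]
  have hpd : (n : ℂ) ^ (c - a - b) ≠ 0 := by simp [Complex.cpow_eq_zero_iff, hn0]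
  have hpf : (n : ℂ) ^ (c - b) ≠ 0 := by simp [Complex.cpow_eq_zero_iff, hn0]
  have hef : (n : ℂ) ^ (c - a) * (n : ℂ) ^ (c - b) = (n : ℂ) ^ c * (n : ℂ) ^ (c - a - b) := by
    rw [← Complex.cpow_add _ _ hn0, ← Complex.cpow_add _ _ hn0]
    congr 1
    ring
  simp only [Pi.div_apply]
  rw [prod_eq_poch, poch_eq_gammaSeq hn (hPe (n + 1)), poch_eq_gammaSeq hn (hPf (n + 1)),
    poch_eq_gammaSeq hn (hPc (n + 1)), poch_eq_gammaSeq hn (hPd (n + 1))]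
  exact (aux_ratio ((n : ℂ) ^ (c - a)) ((n : ℂ) ^ (c - b)) ((n : ℂ) ^ c)
    ((n : ℂ) ^ (c - a - b)) (Complex.GammaSeq (c - a) n) (Complex.GammaSeq (c - b) n)
    (Complex.GammaSeq c n) (Complex.GammaSeq (c - a - b) n) (c - a + n) (c - b + n)
    (c + n) (c - a - b + n) (n.factorial : ℂ) hGe hGf hen hfn hpc hpd hfac hef).symm

lemma poch_ofReal (M : ℝ) (k : ℕ) :
    (ascPochhammer ℂ k).eval ((M : ℂ)) = Complex.ofReal ((ascPochhammer ℝ k).eval M) := by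
  rw [← ascPochhammer_map (Complex.ofRealHom) k, Polynomial.eval_map]
  exact Polynomial.eval₂_at_apply (p := ascPochhammer ℝ k) Complex.ofRealHom M

lemma norm_poch_ofReal {M : ℝ} (hM : 0 < M) (k : ℕ) :
    ‖(ascPochhammer ℂ k).eval ((M : ℂ))‖ = (ascPochhammer ℝ k).eval M := by
  rw [poch_ofReal, Complex.norm_real]
  exact abs_of_pos (ascPochhammer_pos k M hM)

lemma norm_add_nat_ge (c : ℂ) (x : ℝ) (hx : 0 ≤ x) (n : ℕ) (h : x + ‖c‖ ≤ (n : ℝ)) :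
    x ≤ ‖c + n‖ := by
  have h1 : ‖(n : ℂ)‖ ≤ ‖c + n‖ + ‖c‖ := by
    calc ‖(n : ℂ)‖ = ‖(c + n) + (-c)‖ := by ring_nf
    _ ≤ ‖c + n‖ + ‖-c‖ := norm_add_le _ _
    _ = ‖c + n‖ + ‖c‖ := by rw [norm_neg]
  have h2 : ‖(n : ℂ)‖ = (n : ℝ) := by simp
  linarith

lemma poch_lower (c : ℂ) {M : ℝ} (hM : 0 < M) {n : ℕ} (hn : M + ‖c‖ ≤ (n : ℝ)) :
    ∀ k : ℕ, 1 ≤ k →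
      ((n : ℝ) - ‖c‖) / M * (ascPochhammer ℝ k).eval M ≤ ‖(ascPochhammer ℂ k).eval (c + n)‖ := by
  have hpos : 0 < (n : ℝ) - ‖c‖ := by have := norm_nonneg c; linarith
  intro k hk
  induction k, hk using Nat.le_induction with
  | base =>
    simp only [ascPochhammer_one, Polynomial.eval_X]
    rw [div_mul_cancel₀ _ (ne_of_gt hM)]
    exact norm_add_nat_ge c _ (by linarith) n (by linarith)
  | succ k hk ih =>
    rw [ascPochhammer_succ_eval, ascPochhammer_succ_eval, norm_mul, ← mul_assoc]
    have hM' : (0 : ℝ) < M + k := by positivity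
    have h2 : M + (k : ℝ) ≤ ‖c + n + k‖ := by
      have : c + (n : ℂ) + (k : ℂ) = c + ((n + k : ℕ) : ℂ) := by push_cast; ring
      rw [this]
      apply norm_add_nat_ge c _ (le_of_lt hM') (n + k)
      push_cast
      linarith
    have hnn : 0 ≤ ((n : ℝ) - ‖c‖) / M * (ascPochhammer ℝ k).eval M := by
      have := ascPochhammer_pos k M hM
      positivity
    calc ((n : ℝ) - ‖c‖) / M * (ascPochhammer ℝ k).eval M * (M + k)
        ≤ ‖(ascPochhammer ℂ k).eval (c + n)‖ * ‖c + (n : ℂ) + k‖ :=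
          mul_le_mul ih h2 (le_of_lt hM') (norm_nonneg _)
    _ = _ := by norm_cast

lemma GA_zero (a b c : ℂ) : GA a b c 0 = 1 := by simp [GA]

set_option maxHeartbeats 1600000 in
lemma tendsto_tsum_GA_one (a b c : ℂ) (h : 0 < (c - a - b).re) (hc : ∀ k : ℕ, c ≠ -(k : ℂ)) :
    Tendsto (fun n : ℕ => ∑' k, GA a b (c + n) k) atTop (𝓝 1) := by
  set M : ℝ := ‖a‖ + ‖b‖ + 3 with hMdef
  have hM0 : 0 < M := by have := norm_nonneg a; have := norm_nonneg b; positivity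
  have hMne : ∀ j : ℕ, (M : ℂ) ≠ -(j : ℂ) := by
    intro j hj
    have := congrArg Complex.re hj
    simp only [Complex.ofReal_re, Complex.neg_re, Complex.natCast_re] at this
    have := Nat.cast_nonneg (α := ℝ) j
    linarith
  have hPM := poch_ne_zero hMne
  have hDsum : Summable (fun k => ‖GA a b ((M : ℂ)) k‖) := by
    apply summable_norm_GA a b ((M : ℂ)) hPM
    have h1 : a.re ≤ ‖a‖ := Complex.re_le_norm a
    have h2 : b.re ≤ ‖b‖ := Complex.re_le_norm b
    simp only [Complex.sub_re, Complex.ofReal_re]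
    rw [hMdef]
    linarith
  have hsummable : ∀ n : ℕ, Summable (fun k => ‖GA a b (c + n) k‖) := fun n =>
    summable_norm_GA a b (c + n) (poch_ne_zero (shift_ne hc n)) (shift_re h n)
  set S1 : ℝ := ∑' k, ‖GA a b ((M : ℂ)) (k + 1)‖ with hS1def
  have key : ∀ᶠ n : ℕ in atTop,
      ‖(∑' k, GA a b (c + n) k) - 1‖ ≤ M / ((n : ℝ) - ‖c‖) * S1 := by
    filter_upwards [eventually_ge_atTop ⌈M + ‖c‖⌉₊] with n hn
    have hnR : M + ‖c‖ ≤ (n : ℝ) := le_trans (Nat.le_ceil _) (by exact_mod_cast hn)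
    have hpos : 0 < (n : ℝ) - ‖c‖ := by linarith
    have hsplit : (∑' k, GA a b (c + n) k) = GA a b (c + n) 0 + ∑' k, GA a b (c + n) (k + 1) :=
      Summable.tsum_eq_zero_add (hsummable n).of_norm
    rw [hsplit, GA_zero, add_sub_cancel_left]
    have hb1 : ‖∑' k, GA a b (c + n) (k + 1)‖ ≤ ∑' k, ‖GA a b (c + n) (k + 1)‖ :=
      norm_tsum_le_tsum_norm ((summable_nat_add_iff 1).2 (hsummable n))
    have hb2 : ∀ k : ℕ, ‖GA a b (c + n) (k + 1)‖ ≤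
        M / ((n : ℝ) - ‖c‖) * ‖GA a b ((M : ℂ)) (k + 1)‖ := by
      intro k
      have hlow := poch_lower c hM0 hnR (k + 1) (by omega)
      have hMev : (0 : ℝ) < (ascPochhammer ℝ (k + 1)).eval M := ascPochhammer_pos _ _ hM0
      have hfac : (0 : ℝ) < ((k + 1).factorial : ℝ) := by positivity
      have hGAn : ‖GA a b (c + n) (k + 1)‖ =
          ‖(ascPochhammer ℂ (k + 1)).eval a‖ * ‖(ascPochhammer ℂ (k + 1)).eval b‖ /
            (‖(ascPochhammer ℂ (k + 1)).eval (c + n)‖ * ((k + 1).factorial : ℝ)) := by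
        rw [GA, norm_div, norm_mul, norm_mul, Complex.norm_natCast]
      have hGAM : ‖GA a b ((M : ℂ)) (k + 1)‖ =
          ‖(ascPochhammer ℂ (k + 1)).eval a‖ * ‖(ascPochhammer ℂ (k + 1)).eval b‖ /
            ((ascPochhammer ℝ (k + 1)).eval M * ((k + 1).factorial : ℝ)) := by
        rw [GA, norm_div, norm_mul, norm_mul, Complex.norm_natCast, norm_poch_ofReal hM0]
      rw [hGAn, hGAM]
      have hrew : M / ((n : ℝ) - ‖c‖) *
          (‖(ascPochhammer ℂ (k + 1)).eval a‖ * ‖(ascPochhammer ℂ (k + 1)).eval b‖ /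
            ((ascPochhammer ℝ (k + 1)).eval M * ((k + 1).factorial : ℝ))) =
          ‖(ascPochhammer ℂ (k + 1)).eval a‖ * ‖(ascPochhammer ℂ (k + 1)).eval b‖ /
            (((n : ℝ) - ‖c‖) / M * (ascPochhammer ℝ (k + 1)).eval M *
              ((k + 1).factorial : ℝ)) := by
        rw [div_mul_div_comm]
        rw [div_eq_div_iff (ne_of_gt (mul_pos hpos (mul_pos hMev hfac)))
          (ne_of_gt (mul_pos (mul_pos (div_pos hpos hM0) hMev) hfac))]
        field_simp
      rw [hrew]
      have hlow' : 0 < ((n : ℝ) - ‖c‖) / M * (ascPochhammer ℝ (k + 1)).eval M :=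
        mul_pos (div_pos hpos hM0) hMev
      apply div_le_div_of_nonneg_left (by positivity) (mul_pos hlow' hfac)
      exact mul_le_mul_of_nonneg_right hlow (le_of_lt hfac)
    calc ‖∑' k, GA a b (c + n) (k + 1)‖ ≤ ∑' k, ‖GA a b (c + n) (k + 1)‖ := hb1
    _ ≤ ∑' k, M / ((n : ℝ) - ‖c‖) * ‖GA a b ((M : ℂ)) (k + 1)‖ := by
        apply Summable.tsum_le_tsum hb2 ((summable_nat_add_iff 1).2 (hsummable n))
        exact ((summable_nat_add_iff 1).2 hDsum).mul_left _
    _ = M / ((n : ℝ) - ‖c‖) * S1 := tsum_mul_left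
  have hg : Tendsto (fun n : ℕ => M / ((n : ℝ) - ‖c‖) * S1) atTop (𝓝 0) := by
    have h1 : Tendsto (fun n : ℕ => (n : ℝ) - ‖c‖) atTop atTop := by
      apply tendsto_atTop_add_const_right atTop (-‖c‖)
      exact tendsto_natCast_atTop_atTop
    have h2 := (h1.inv_tendsto_atTop.const_mul M).mul_const S1
    rw [mul_zero, zero_mul] at h2
    apply h2.congr
    intro n
    simp [div_eq_mul_inv]
  have h0 : Tendsto (fun n : ℕ => (∑' k, GA a b (c + n) k) - 1) atTop (𝓝 0) :=
    squeeze_zero_norm' key hg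
  have := h0.add_const 1
  rw [zero_add] at this
  apply this.congr
  intro n
  ring

/-- Gauss's summation theorem: if `Re (c - a - b) > 0` and `c` is not a nonpositive
integer, then the hypergeometric series converges at `z = 1` and
`₂F₁(a, b; c; 1) = Γ(c) Γ(c-a-b) / (Γ(c-a) Γ(c-b))`. -/
theorem gauss_summation (a b c : ℂ) (h : 0 < (c - a - b).re)
    (hc : ∀ k : ℕ, c ≠ -(k : ℂ)) :
    Summable (hypTerm a b c 1) ∧
      ∑' k : ℕ, hypTerm a b c 1 k =
        Complex.Gamma c * Complex.Gamma (c - a - b) /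
          (Complex.Gamma (c - a) * Complex.Gamma (c - b)) := by
  have hPc := poch_ne_zero hc
  have hGAeq : hypTerm a b c 1 = GA a b c := funext fun k => by simp [hypTerm, GA]
  rw [hGAeq]
  refine ⟨(summable_norm_GA a b c hPc h).of_norm, ?_⟩
  have hlim := (prod_ratio_tendsto a b c h hc).mul (tendsto_tsum_GA_one a b c h hc)
  rw [mul_one] at hlim
  have hconst : Tendsto (fun _ : ℕ => ∑' k, GA a b c k) atTop (𝓝 (∑' k, GA a b c k)) :=
    tendsto_const_nhds
  exact tendsto_nhds_unique (hconst.congr (fun n => iterate_relation a b c h hc n)) hlim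

end GaussAux
end

section
/- For |z| < 1 and c not a nonpositive integer, ₂F₁(a,b;c;z) = (1−z)^{c−a−b} ₂F₁(c−a, c−b; c; z) (the Euler transform). -/
open Complex

/-- The Gauss hypergeometric function `₂F₁(a, b; c; z)`, defined by its power series. -/
noncomputable def hyp2F1 (a b c z : ℂ) : ℂ :=
  ∑' k : ℕ, ((ascPochhammer ℂ k).eval a * (ascPochhammer ℂ k).eval b /
    ((ascPochhammer ℂ k).eval c * (k.factorial : ℂ))) * z ^ k

namespace EulerAux

open Filter Finset Topology Metric

/-- The `k`-th coefficient of the hypergeometric series. -/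
noncomputable def hterm (a b c : ℂ) (k : ℕ) : ℂ :=
  (ascPochhammer ℂ k).eval a * (ascPochhammer ℂ k).eval b /
    ((ascPochhammer ℂ k).eval c * (k.factorial : ℂ))

lemma hyp2F1_eq (a b c z : ℂ) : hyp2F1 a b c z = ∑' k : ℕ, hterm a b c k * z ^ k := rfl

lemma one_ne_neg_nat (k : ℕ) : (1 : ℂ) ≠ -(k : ℂ) := by
  intro h
  have h2 := congrArg Complex.re h
  simp at h2
  have : (0:ℝ) ≤ (k:ℝ) := Nat.cast_nonneg k
  linarith

lemma add_nat_ne_zero {c : ℂ} (hc : ∀ k : ℕ, c ≠ -(k : ℂ)) (k : ℕ) : c + (k : ℂ) ≠ 0 := by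
  intro h
  exact hc k (by linear_combination h)

lemma poch_ne_zero {c : ℂ} (hc : ∀ k : ℕ, c ≠ -(k : ℂ)) (n : ℕ) :
    (ascPochhammer ℂ n).eval c ≠ 0 := by
  induction n with
  | zero => simp
  | succ n ih =>
    rw [ascPochhammer_succ_eval]
    exact mul_ne_zero ih (add_nat_ne_zero hc n)

lemma hterm_zero (a b c : ℂ) : hterm a b c 0 = 1 := by
  simp [hterm]

lemma hterm_rec (a b c : ℂ) (hc : ∀ k : ℕ, c ≠ -(k : ℂ)) (k : ℕ) :
    ((k : ℂ) + 1) * (c + k) * hterm a b c (k + 1) = (a + k) * (b + k) * hterm a b c k := by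
  have h1 : (ascPochhammer ℂ k).eval c ≠ 0 := poch_ne_zero hc k
  have h2 : c + (k : ℂ) ≠ 0 := add_nat_ne_zero hc k
  have h3 : ((k.factorial : ℂ)) ≠ 0 := by
    exact_mod_cast Nat.cast_ne_zero.mpr k.factorial_ne_zero
  have h4 : ((k : ℂ) + 1) ≠ 0 := Nat.cast_add_one_ne_zero k
  simp only [hterm, ascPochhammer_succ_eval, Nat.factorial_succ, Nat.cast_mul, Nat.cast_add,
    Nat.cast_one]
  field_simp

lemma hterm_one_rec (t : ℂ) (m : ℕ) :
    ((m : ℂ) + 1) * hterm t 1 1 (m + 1) = (t + m) * hterm t 1 1 m := by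
  have h := hterm_rec t 1 1 one_ne_neg_nat m
  have hne : ((1 : ℂ) + m) ≠ 0 := by
    have := Nat.cast_add_one_ne_zero (R := ℂ) m
    simpa [add_comm] using this
  apply mul_left_cancel₀ hne
  linear_combination h

lemma tendsto_ratio (d e : ℂ) (he : ∀ᶠ k : ℕ in atTop, e + (k : ℂ) ≠ 0) :
    Tendsto (fun k : ℕ => (d + k) / (e + k)) atTop (𝓝 1) := by
  have hnorm : Tendsto (fun k : ℕ => ‖e + (k : ℂ)‖) atTop atTop := by
    apply tendsto_atTop_mono (f := fun k : ℕ => (k : ℝ) - ‖e‖)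
    · intro k
      have h'' : (k : ℝ) ≤ ‖e + (k : ℂ)‖ + ‖e‖ := by
        simpa only [add_sub_cancel_left, Complex.norm_natCast] using
          norm_sub_le (e + (k : ℂ)) e
      linarith
    · exact tendsto_atTop_add_const_right _ _ tendsto_natCast_atTop_atTop
  have h0 : Tendsto (fun k : ℕ => (d - e) / (e + k)) atTop (𝓝 0) := by
    rw [tendsto_zero_iff_norm_tendsto_zero]
    simp only [norm_div]
    have := hnorm.inv_tendsto_atTop
    have h := this.const_mul ‖d - e‖
    simpa [div_eq_mul_inv] using h
  have h1 : Tendsto (fun k : ℕ => 1 + (d - e) / (e + k)) atTop (𝓝 1) := by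
    simpa using (tendsto_const_nhds (x := (1:ℂ)) (f := atTop)).add h0
  apply h1.congr'
  filter_upwards [he] with k hk
  field_simp
  ring

lemma summable_norm_of_ratio {f q : ℕ → ℂ} {L : ℝ} (hL : L < 1)
    (hq : Tendsto (fun n => ‖q n‖) atTop (𝓝 L))
    (hfq : ∀ᶠ n in atTop, f (n + 1) = f n * q n) : Summable fun n => ‖f n‖ := by
  set r : ℝ := (L + 1) / 2 with hr
  have hr1 : r < 1 := by rw [hr]; linarith
  have hLr : L < r := by rw [hr]; linarith
  have hev : ∀ᶠ n in atTop, ‖q n‖ < r := hq.eventually (eventually_lt_nhds hLr)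
  apply summable_of_ratio_norm_eventually_le hr1
  filter_upwards [hfq, hev] with n h1 h2
  rw [norm_norm, norm_norm, h1, norm_mul, mul_comm r ‖f n‖]
  exact mul_le_mul_of_nonneg_left h2.le (norm_nonneg _)

lemma summable_norm_hterm (a b c : ℂ) (hc : ∀ k : ℕ, c ≠ -(k : ℂ)) {z : ℂ} (hz : ‖z‖ < 1) :
    Summable fun k => ‖hterm a b c k * z ^ k‖ := by
  apply summable_norm_of_ratio (L := ‖z‖) hz
    (q := fun k => ((a + k) / (c + k)) * (((b + k) / (1 + k))) * z)
  · have ht : Tendsto (fun k : ℕ => ((a + k) / (c + k)) * ((b + k) / (1 + k)) * z)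
        atTop (𝓝 (1 * 1 * z)) := by
      refine Tendsto.mul (Tendsto.mul (tendsto_ratio a c ?_) (tendsto_ratio b 1 ?_))
        tendsto_const_nhds
      · exact Eventually.of_forall (add_nat_ne_zero hc)
      · exact Eventually.of_forall (add_nat_ne_zero one_ne_neg_nat)
    simpa using ht.norm
  · apply Eventually.of_forall
    intro k
    have h := hterm_rec a b c hc k
    have h2 : c + (k : ℂ) ≠ 0 := add_nat_ne_zero hc k
    have h4 : ((1:ℂ) + k) ≠ 0 := by
      have := Nat.cast_add_one_ne_zero (R := ℂ) k
      simpa [add_comm] using this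
    have hq : (a + (k:ℂ)) / (c + k) * ((b + k) / (1 + k)) * z =
        ((a + k) * (b + k) * z) / ((c + k) * (1 + k)) := by
      field_simp
    rw [hq, ← mul_div_assoc, eq_div_iff (mul_ne_zero h2 h4)]
    linear_combination (z ^ (k + 1)) * h

lemma summable_norm_deriv (t : ℂ) {x : ℂ} (hx : ‖x‖ < 1) :
    Summable fun n => ‖hterm t 1 1 n * ((n : ℂ) * x ^ (n - 1))‖ := by
  apply summable_norm_of_ratio (L := ‖x‖) hx (q := fun n => ((t + n) / ((0:ℂ) + n)) * x)
  · have ht : Tendsto (fun n : ℕ => ((t + n) / ((0:ℂ) + n)) * x) atTop (𝓝 (1 * x)) := by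
      refine (tendsto_ratio t 0 ?_).mul tendsto_const_nhds
      filter_upwards [eventually_gt_atTop 0] with n hn
      simpa using hn.ne'
    simpa using ht.norm
  · filter_upwards [eventually_gt_atTop 0] with n hn
    obtain ⟨m, rfl⟩ : ∃ m, n = m + 1 := ⟨n - 1, by omega⟩
    have h := hterm_one_rec t (m + 1)
    have hn0 : ((0:ℂ) + (↑(m+1):ℂ)) ≠ 0 := by
      push_cast
      intro hcon
      have := Nat.cast_add_one_ne_zero (R := ℂ) m
      apply this
      linear_combination hcon
    have hq : ((t + (↑(m+1):ℂ)) / ((0:ℂ) + (↑(m+1):ℂ))) * x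
        = ((t + (↑(m+1):ℂ)) * x) / ((0:ℂ) + (↑(m+1):ℂ)) := by ring
    rw [hq, ← mul_div_assoc, eq_div_iff hn0]
    simp only [Nat.add_sub_cancel]
    push_cast at h ⊢
    linear_combination ((m:ℂ) + 1) * x ^ (m + 1) * h

lemma summable_hterm_pow {a b c : ℂ} (hc : ∀ k : ℕ, c ≠ -(k : ℂ)) {z : ℂ} (hz : ‖z‖ < 1) :
    Summable fun k => hterm a b c k * z ^ k :=
  (summable_norm_hterm a b c hc hz).of_norm

lemma binomial_sum (t : ℂ) {z : ℂ} (hz : ‖z‖ < 1) :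
    (∑' n : ℕ, hterm t 1 1 n * z ^ n) = (1 - z) ^ (-t) := by
  set F : ℂ → ℂ := fun w => ∑' n : ℕ, hterm t 1 1 n * w ^ n with hF
  -- derivative of F on the unit ball
  have hderiv : ∀ w : ℂ, ‖w‖ < 1 →
      HasDerivAt F (∑' n : ℕ, hterm t 1 1 n * ((n : ℂ) * w ^ (n - 1))) w := by
    intro w hw
    set r : ℝ := (‖w‖ + 1) / 2 with hr
    have hw' : ‖w‖ < r := by rw [hr]; linarith
    have hr1 : r < 1 := by rw [hr]; linarith
    have hr0 : 0 < r := lt_of_le_of_lt (norm_nonneg w) hw'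
    have hrn : ‖(r : ℂ)‖ < 1 := by
      rw [Complex.norm_real, Real.norm_of_nonneg hr0.le]; exact hr1
    have hg : ∀ (n : ℕ) (y : ℂ), y ∈ ball (0:ℂ) r →
        HasDerivAt (fun y : ℂ => hterm t 1 1 n * y ^ n)
          (hterm t 1 1 n * ((n : ℂ) * y ^ (n - 1))) y := by
      intro n y _
      exact (hasDerivAt_pow n y).const_mul (hterm t 1 1 n)
    have hg' : ∀ (n : ℕ) (y : ℂ), y ∈ ball (0:ℂ) r →
        ‖hterm t 1 1 n * ((n : ℂ) * y ^ (n - 1))‖ ≤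
          ‖hterm t 1 1 n * ((n : ℂ) * (r:ℂ) ^ (n - 1))‖ := by
      intro n y hy
      rw [mem_ball, dist_zero_right] at hy
      simp only [norm_mul, Complex.norm_natCast, Complex.norm_real, norm_pow]
      rw [Real.norm_of_nonneg hr0.le]
      gcongr
    have hg0 : Summable fun n : ℕ => hterm t 1 1 n * (0:ℂ) ^ n := by
      apply summable_of_ne_finset_zero (s := {0})
      intro n hn
      simp only [Finset.mem_singleton] at hn
      simp [zero_pow hn]
    exact hasDerivAt_tsum_of_isPreconnected (summable_norm_deriv t hrn) isOpen_ball
      (convex_ball (0:ℂ) r).isPreconnected hg hg' (mem_ball_self hr0) hg0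
      (by rwa [mem_ball, dist_zero_right])
  -- the differential equation (1 - w) * F'(w) = t * F(w)
  have hode : ∀ w : ℂ, ‖w‖ < 1 →
      (1 - w) * (∑' n : ℕ, hterm t 1 1 n * ((n : ℂ) * w ^ (n - 1))) = t * F w := by
    intro w hw
    set P : ℕ → ℂ := fun n => hterm t 1 1 n * ((n : ℂ) * w ^ (n - 1)) with hP
    set Q : ℕ → ℂ := fun n => hterm t 1 1 n * (n : ℂ) * w ^ n with hQ
    have hPQ : ∀ n, P n * w = Q n := by
      intro n
      match n with
      | 0 => simp [hP, hQ]
      | Nat.succ m =>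
        simp only [hP, hQ, Nat.succ_sub_one]
        rw [pow_succ]
        ring
    have hSP : Summable P := (summable_norm_deriv t hw).of_norm
    have hSQ : Summable Q := by
      apply Summable.congr (hSP.mul_right w) hPQ
    have hSP' : Summable (fun n => P (n + 1)) := (summable_nat_add_iff 1).mpr hSP
    have e1 : (∑' n, P n) = ∑' n, P (n + 1) := by
      rw [hSP.tsum_eq_zero_add]
      simp [hP]
    have e2 : w * (∑' n, P n) = ∑' n, Q n := by
      rw [← tsum_mul_left]
      apply tsum_congr
      intro n
      rw [mul_comm w (P n), hPQ n]
    calc (1 - w) * (∑' n, P n) = (∑' n, P (n + 1)) - w * (∑' n, P n) := by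
          rw [← e1]; ring
      _ = (∑' n, P (n + 1)) - ∑' n, Q n := by rw [e2]
      _ = ∑' n, (P (n + 1) - Q n) := (hSP'.tsum_sub hSQ).symm
      _ = ∑' n, t * (hterm t 1 1 n * w ^ n) := by
          apply tsum_congr
          intro n
          have h := hterm_one_rec t n
          simp only [hP, hQ, Nat.add_sub_cancel]
          push_cast
          linear_combination w ^ n * h
      _ = t * F w := tsum_mul_left
  -- the auxiliary function (1-w)^t * F w has zero derivative on the ball
  have hne1 : ∀ w : ℂ, ‖w‖ < 1 → (1 : ℂ) - w ≠ 0 := by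
    intro w hw h0
    have : w = 1 := by linear_combination -h0
    rw [this] at hw
    simp at hw
  have hslit : ∀ w : ℂ, ‖w‖ < 1 → (1 : ℂ) - w ∈ Complex.slitPlane := by
    intro w hw
    rw [Complex.mem_slitPlane_iff]
    left
    have : |w.re| ≤ ‖w‖ := Complex.abs_re_le_norm w
    simp only [Complex.sub_re, Complex.one_re]
    have := abs_le.mp this
    linarith
  set H : ℂ → ℂ := fun w => (1 - w) ^ t * F w with hH
  have hHderiv : ∀ w ∈ ball (0 : ℂ) 1, HasDerivAt H 0 w := by
    intro w hw
    rw [mem_ball, dist_zero_right] at hw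
    have h1 : HasDerivAt (fun w : ℂ => (1 - w) ^ t)
        (t * (1 - w) ^ (t - 1) * (-1)) w := by
      have hlin : HasDerivAt (fun w : ℂ => 1 - w) (-1) w := by
        simpa using (hasDerivAt_id w).const_sub 1
      exact hlin.cpow_const (hslit w hw)
    have h2 := (h1.mul (hderiv w hw))
    have key : t * (1 - w) ^ (t - 1) * (-1) * F w +
        (1 - w) ^ t * (∑' n : ℕ, hterm t 1 1 n * ((n : ℂ) * w ^ (n - 1))) = 0 := by
      have hsplit : (1 - w) ^ t = (1 - w) ^ (t - 1) * (1 - w) := by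
        conv_lhs => rw [show t = t - 1 + 1 by ring]
        rw [Complex.cpow_add _ _ (hne1 w hw), Complex.cpow_one]
      rw [hsplit]
      have := hode w hw
      linear_combination (1 - w) ^ (t - 1) * this
    rw [key] at h2
    exact h2
  -- constancy
  have hconst : H z = H 0 := by
    have hdiff : DifferentiableOn ℂ H (ball (0:ℂ) 1) := by
      intro x hx
      exact ((hHderiv x hx).differentiableAt).differentiableWithinAt
    have hfd : ∀ x ∈ ball (0:ℂ) 1, fderivWithin ℂ H (ball (0:ℂ) 1) x = 0 := by
      intro x hx
      rw [fderivWithin_of_isOpen isOpen_ball hx]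
      have := ((hasDerivAt_iff_hasFDerivAt.mp (hHderiv x hx))).fderiv
      rw [this]
      ext y
      simp

    exact (convex_ball (0:ℂ) 1).is_const_of_fderivWithin_eq_zero hdiff hfd
      (by simpa [mem_ball, dist_zero_right] using hz)
      (by simp [mem_ball])
  have hF0 : F 0 = 1 := by
    simp only [hF]
    rw [tsum_eq_single 0 (fun n hn => by simp [zero_pow hn])]
    simp [hterm_zero]
  have hH0 : H 0 = 1 := by
    simp [hH, hF0]
  have hHz : (1 - z) ^ t * F z = 1 := by
    have h := hconst
    rw [hH0] at h
    simpa only [hH] using h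
  rw [Complex.cpow_neg]
  have hcz : (1 - z) ^ t ≠ 0 := by
    intro h0
    rw [Complex.cpow_eq_zero_iff] at h0
    exact hne1 z hz h0.1
  field_simp
  linear_combination hHz

lemma coeff_rec (a b c : ℂ) (hc : ∀ k : ℕ, c ≠ -(k : ℂ)) (k : ℕ) :
    ((k : ℂ) + 1) * (c + k) *
        ∑ j ∈ range (k + 2), hterm (a + b - c) 1 1 (k + 1 - j) * hterm (c - a) (c - b) c j =
      (a + k) * (b + k) *
        ∑ j ∈ range (k + 1), hterm (a + b - c) 1 1 (k - j) * hterm (c - a) (c - b) c j := by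
  set t : ℂ := a + b - c with ht
  set v : ℕ → ℂ := fun n => hterm t 1 1 n with hv
  set u : ℕ → ℂ := fun j => hterm (c - a) (c - b) c j with hu
  set g : ℕ → ℂ := fun j =>
    if j ≤ k + 1 then (j : ℂ) * (c + j - 1) * (v (k + 1 - j) * u j) else 0 with hg
  have tele : ∑ j ∈ range (k + 2), (g j - g (j + 1)) = g 0 - g (k + 2) :=
    Finset.sum_range_sub' g (k + 2)
  have hg0 : g 0 = 0 := by simp [hg]
  have hgk2 : g (k + 2) = 0 := by
    rw [hg]
    simp only [if_neg (by omega : ¬ (k + 2 ≤ k + 1))]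
  have pt : ∀ j ∈ range (k + 2),
      ((k : ℂ) + 1) * (c + k) * (v (k + 1 - j) * u j)
        - (if j ≤ k then (a + k) * (b + k) * (v (k - j) * u j) else 0) = g j - g (j + 1) := by
    intro j hj
    rw [mem_range] at hj
    by_cases hjk : j ≤ k
    · obtain ⟨m, rfl⟩ : ∃ m, k = j + m := ⟨k - j, by omega⟩
      rw [if_pos hjk]
      have e1 : j + m + 1 - j = m + 1 := by omega
      have e2 : j + m - j = m := by omega
      have e3 : j + m + 1 - (j + 1) = m := by omega
      have hif1 : j ≤ j + m + 1 := by omega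
      have hif2 : j + 1 ≤ j + m + 1 := by omega
      rw [hg]
      simp only [e1, e2, e3, if_pos hif1, if_pos hif2]
      have Lv := hterm_one_rec t m
      have Lu := hterm_rec (c - a) (c - b) c hc j
      push_cast
      linear_combination ((c + 2 * (j : ℂ) + m) * u j) * Lv + (v m) * Lu
    · have hj1 : j = k + 1 := by omega
      subst hj1
      rw [if_neg hjk, hg]
      simp only [Nat.sub_self, if_pos (le_refl (k + 1)), if_neg (by omega : ¬ (k + 1 + 1 ≤ k + 1))]
      push_cast
      ring
  have hsum : ∑ j ∈ range (k + 2),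
      (((k : ℂ) + 1) * (c + k) * (v (k + 1 - j) * u j)
        - (if j ≤ k then (a + k) * (b + k) * (v (k - j) * u j) else 0)) = 0 := by
    rw [Finset.sum_congr rfl pt, tele, hg0, hgk2, sub_zero]
  rw [Finset.sum_sub_distrib] at hsum
  have h1 : ∑ j ∈ range (k + 2), ((k : ℂ) + 1) * (c + k) * (v (k + 1 - j) * u j)
      = ((k : ℂ) + 1) * (c + k) * ∑ j ∈ range (k + 2), v (k + 1 - j) * u j :=
    (Finset.mul_sum _ _ _).symm
  have h2 : ∑ j ∈ range (k + 2), (if j ≤ k then (a + k) * (b + k) * (v (k - j) * u j) else 0)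
      = (a + k) * (b + k) * ∑ j ∈ range (k + 1), v (k - j) * u j := by
    rw [Finset.sum_range_succ, if_neg (by omega : ¬ (k + 1 ≤ k)), add_zero, Finset.mul_sum]
    apply Finset.sum_congr rfl
    intro j hj
    rw [mem_range] at hj
    rw [if_pos (by omega : j ≤ k)]
  rw [h1, h2] at hsum
  linear_combination hsum

lemma coeff_eq (a b c : ℂ) (hc : ∀ k : ℕ, c ≠ -(k : ℂ)) (k : ℕ) :
    ∑ j ∈ range (k + 1), hterm (a + b - c) 1 1 (k - j) * hterm (c - a) (c - b) c j
      = hterm a b c k := by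
  induction k with
  | zero => simp [hterm_zero]
  | succ k ih =>
    have hrec := coeff_rec a b c hc k
    have hA := hterm_rec a b c hc k
    have hne : ((k : ℂ) + 1) * (c + k) ≠ 0 :=
      mul_ne_zero (Nat.cast_add_one_ne_zero k) (add_nat_ne_zero hc k)
    apply mul_left_cancel₀ hne
    rw [hrec, ih]
    linear_combination -hA

end EulerAux

/-- The Euler transform: `₂F₁(a,b;c;z) = (1-z)^(c-a-b) ₂F₁(c-a, c-b; c; z)`
for `|z| < 1` and `c` not a nonpositive integer. -/
theorem euler_transform (a b c z : ℂ) (hz : ‖z‖ < 1)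
    (hc : ∀ k : ℕ, c ≠ -(k : ℂ)) :
    hyp2F1 a b c z = (1 - z) ^ (c - a - b) * hyp2F1 (c - a) (c - b) c z := by
  have Su : Summable fun j : ℕ => ‖EulerAux.hterm (c - a) (c - b) c j * z ^ j‖ :=
    EulerAux.summable_norm_hterm _ _ _ hc hz
  have Sv : Summable fun i : ℕ => ‖EulerAux.hterm (a + b - c) 1 1 i * z ^ i‖ :=
    EulerAux.summable_norm_hterm _ _ _ EulerAux.one_ne_neg_nat hz
  symm
  calc (1 - z) ^ (c - a - b) * hyp2F1 (c - a) (c - b) c z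
      = (∑' j : ℕ, EulerAux.hterm (c - a) (c - b) c j * z ^ j) *
          (∑' i : ℕ, EulerAux.hterm (a + b - c) 1 1 i * z ^ i) := by
        rw [EulerAux.hyp2F1_eq, show c - a - b = -(a + b - c) by ring,
          ← EulerAux.binomial_sum (a + b - c) hz, mul_comm]
    _ = ∑' k : ℕ, ∑ p ∈ Finset.HasAntidiagonal.antidiagonal k,
          (EulerAux.hterm (c - a) (c - b) c p.1 * z ^ p.1) *
            (EulerAux.hterm (a + b - c) 1 1 p.2 * z ^ p.2) :=
        tsum_mul_tsum_eq_tsum_sum_antidiagonal_of_summable_norm Su Sv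
    _ = ∑' k : ℕ, EulerAux.hterm a b c k * z ^ k := by
        apply tsum_congr
        intro k
        rw [Finset.Nat.sum_antidiagonal_eq_sum_range_succ_mk]
        have hpt : ∀ j ∈ Finset.range (k + 1),
            (EulerAux.hterm (c - a) (c - b) c j * z ^ j) *
              (EulerAux.hterm (a + b - c) 1 1 (k - j) * z ^ (k - j))
            = (EulerAux.hterm (a + b - c) 1 1 (k - j) * EulerAux.hterm (c - a) (c - b) c j)
                * z ^ k := by
          intro j hj
          rw [Finset.mem_range] at hj
          have hzz : z ^ j * z ^ (k - j) = z ^ k := by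
            rw [← pow_add]
            congr 1
            omega
          rw [← hzz]
          ring
        rw [Finset.sum_congr rfl hpt, ← Finset.sum_mul, EulerAux.coeff_eq a b c hc k]
    _ = hyp2F1 a b c z := (EulerAux.hyp2F1_eq a b c z).symm
end

section
/- For complex a, b, c, d with Re(c) > 0, Re(d) > 0 and Re(c + d − a − b) > 0, one has ∫₀¹ t^{c−1} (1−t)^{d−1} ₂F₁(a,b;c;t) dt = Γ(c)Γ(d)Γ(c+d−a−b) / (Γ(c+d−a)Γ(c+d−b)). -/
open Complex MeasureTheory
open Filter Topology Finset

namespace Hyp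

noncomputable def pc (x : ℂ) (k : ℕ) : ℂ := (ascPochhammer ℂ k).eval x
noncomputable def pr (x : ℝ) (k : ℕ) : ℝ := (ascPochhammer ℝ k).eval x

lemma pc_zero (x : ℂ) : pc x 0 = 1 := by simp [pc]
lemma pr_zero (x : ℝ) : pr x 0 = 1 := by simp [pr]
lemma pc_succ (x : ℂ) (n : ℕ) : pc x (n+1) = pc x n * (x + n) := ascPochhammer_succ_eval n x
lemma pr_succ (x : ℝ) (n : ℕ) : pr x (n+1) = pr x n * (x + n) := ascPochhammer_succ_eval n x

lemma pc_prod (x : ℂ) (n : ℕ) : pc x n = ∏ i ∈ Finset.range n, (x + i) := by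
  induction n with
  | zero => simp [pc_zero]
  | succ n ih => rw [pc_succ, ih, Finset.prod_range_succ]

lemma pr_prod (x : ℝ) (n : ℕ) : pr x n = ∏ i ∈ Finset.range n, (x + i) := by
  induction n with
  | zero => simp [pr_zero]
  | succ n ih => rw [pr_succ, ih, Finset.prod_range_succ]

lemma pr_pos {x : ℝ} (hx : 0 < x) (n : ℕ) : 0 < pr x n := by
  rw [pr_prod]
  exact Finset.prod_pos fun i _ => by positivity

lemma norm_pc_ge {z : ℂ} (hz : 0 < z.re) (n : ℕ) : pr z.re n ≤ ‖pc z n‖ := by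
  rw [pc_prod, pr_prod]
  rw [norm_prod]
  refine Finset.prod_le_prod (fun i _ => by positivity) fun i _ => ?_
  calc z.re + i = (z + i).re := by simp
  _ ≤ ‖z + i‖ := Complex.re_le_norm _

lemma pc_ne_zero {z : ℂ} (h : ∀ i : ℕ, z + i ≠ 0) (n : ℕ) : pc z n ≠ 0 := by
  rw [pc_prod]
  exact Finset.prod_ne_zero_iff.2 fun i _ => h i

lemma pc_ne_zero_of_re_pos {z : ℂ} (hz : 0 < z.re) (n : ℕ) : pc z n ≠ 0 := by
  refine pc_ne_zero (fun i => ?_) n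
  intro h
  have : (z + i).re = 0 := by rw [h]; simp
  simp only [add_re, natCast_re] at this
  have : (0:ℝ) ≤ (i:ℝ) := Nat.cast_nonneg i
  linarith [Complex.add_re z i, (by simp : ((i:ℂ)).re = (i:ℝ))]

lemma pc_shift (s : ℂ) (k : ℕ) : s * pc (s+1) k = pc s k * (s + k) := by
  rw [pc_prod, pc_prod]
  have h1 : ∏ i ∈ Finset.range k, (s + 1 + i) = ∏ i ∈ Finset.range k, (s + (i+1 : ℕ)) := by
    refine Finset.prod_congr rfl fun i _ => by push_cast; ring
  rw [h1]
  have := Finset.prod_range_succ (fun i : ℕ => (s + i)) k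
  have h2 := Finset.prod_range_succ' (fun i : ℕ => (s + i)) k
  calc s * ∏ i ∈ Finset.range k, (s + (i+1:ℕ))
      = (∏ i ∈ Finset.range k, (s + ((i:ℕ)+1:ℕ))) * (s + (0:ℕ)) := by push_cast; ring
    _ = ∏ i ∈ Finset.range (k+1), (s + i) := (h2).symm
    _ = (∏ i ∈ Finset.range k, (s + i)) * (s + k) := this

lemma Gamma_add_nat_c {z : ℂ} (hz : 0 < z.re) (n : ℕ) :
    Complex.Gamma (z + n) = pc z n * Complex.Gamma z := by
  induction n with
  | zero => simp [pc_zero]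
  | succ n ih =>
    have hne : z + n ≠ 0 := by
      intro h
      have := congrArg Complex.re h
      simp only [add_re, natCast_re, zero_re] at this
      have : (0:ℝ) ≤ (n:ℝ) := Nat.cast_nonneg n
      linarith [congrArg Complex.re h, (by simp : ((n:ℂ)).re = (n:ℝ))]
    have : z + (n+1 : ℕ) = (z + n) + 1 := by push_cast; ring
    rw [this, Complex.Gamma_add_one _ hne, ih, pc_succ]
    ring

lemma Gamma_add_nat_r {x : ℝ} (hx : 0 < x) (n : ℕ) :
    Real.Gamma (x + n) = pr x n * Real.Gamma x := by
  induction n with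
  | zero => simp [pr_zero]
  | succ n ih =>
    have hne : x + n ≠ 0 := by positivity
    have : x + (n+1 : ℕ) = (x + n) + 1 := by push_cast; ring
    rw [this, Real.Gamma_add_one hne, ih, pr_succ]
    ring

lemma gs_c (z : ℂ) (m : ℕ) :
    Complex.GammaSeq z m = ((m:ℂ) ^ z * (m.factorial : ℂ)) / pc z (m+1) := by
  rw [Complex.GammaSeq, pc_prod]

lemma gs_r (x : ℝ) (m : ℕ) :
    Real.GammaSeq x m = ((m:ℝ) ^ x * (m.factorial : ℝ)) / pr x (m+1) := by
  rw [Real.GammaSeq, pr_prod]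

end Hyp

namespace Hyp

noncomputable def W (a b : ℂ) (σ : ℝ) (n : ℕ) : ℝ :=
  ‖pc a n‖ * ‖pc b n‖ / (pr σ n * (n.factorial : ℝ))

lemma W_nonneg (a b : ℂ) {σ : ℝ} (hσ : 0 < σ) (n : ℕ) : 0 ≤ W a b σ n := by
  have := pr_pos hσ n
  have : (0:ℝ) < pr σ n * n.factorial := by positivity
  unfold W; positivity

lemma not_neg_nat_iff {z : ℂ} : (∀ k : ℕ, z ≠ -(k:ℂ)) ↔ (∀ i : ℕ, z + i ≠ 0) := by
  constructor
  · intro h i hzi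
    exact h i (by linear_combination hzi)
  · intro h k hk
    exact h k (by rw [hk]; ring)

lemma pc_eventually_zero {z : ℂ} (h : ∃ k : ℕ, z = -(k:ℂ)) :
    ∀ᶠ n in atTop, pc z n = 0 := by
  obtain ⟨k, rfl⟩ := h
  filter_upwards [eventually_ge_atTop (k+1)] with n hn
  rw [pc_prod]
  exact Finset.prod_eq_zero (i := k) (Finset.mem_range.2 (by omega)) (by push_cast; ring)

lemma summable_of_eventually_zero {f : ℕ → ℝ} (h : ∀ᶠ n in atTop, f n = 0) :
    Summable f := by
  obtain ⟨N, hN⟩ := eventually_atTop.1 h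
  refine (summable_nat_add_iff N).1 ?_
  exact summable_zero.congr fun n => (hN (n + N) (by omega)).symm

/-- norm of complex GammaSeq -/
lemma norm_gs (z : ℂ) {m : ℕ} (hm : 1 ≤ m) :
    ‖Complex.GammaSeq z m‖ = (m:ℝ) ^ z.re * (m.factorial : ℝ) / ‖pc z (m+1)‖ := by
  have hm0 : (0:ℝ) < (m:ℝ) := by exact_mod_cast hm
  rw [gs_c, norm_div, norm_mul]
  congr 2
  · rw [show ((m:ℕ):ℂ) = (((m:ℕ):ℝ):ℂ) from by push_cast; rfl,
      Complex.norm_cpow_eq_rpow_re_of_pos hm0]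
  · simp

lemma norm_pc_eq (z : ℂ) (hz : ∀ i : ℕ, z + i ≠ 0) {m : ℕ} (hm : 1 ≤ m) :
    ‖pc z (m+1)‖ = (m:ℝ) ^ z.re * (m.factorial : ℝ) / ‖Complex.GammaSeq z m‖ := by
  have h1 : ‖pc z (m+1)‖ ≠ 0 := norm_ne_zero_iff.2 (pc_ne_zero hz (m+1))
  have hm0 : (0:ℝ) < (m:ℝ) := by exact_mod_cast hm
  have hX : (m:ℝ) ^ z.re * (m.factorial : ℝ) ≠ 0 := by
    have : (0:ℝ) < (m.factorial:ℝ) := by exact_mod_cast m.factorial_pos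
    positivity
  rw [norm_gs z hm]
  field_simp

lemma pr_eq (x : ℝ) (hx : 0 < x) {m : ℕ} (hm : 1 ≤ m) :
    pr x (m+1) = (m:ℝ) ^ x * (m.factorial : ℝ) / Real.GammaSeq x m := by
  have h1 : pr x (m+1) ≠ 0 := (pr_pos hx _).ne'
  have hX : (0:ℝ) < pr x (m+1) := pr_pos hx _
  have hm0 : (0:ℝ) < (m:ℝ) := by exact_mod_cast hm
  have hfac : (0:ℝ) < (m.factorial:ℝ) := by exact_mod_cast m.factorial_pos
  rw [gs_r]
  field_simp

lemma W_eq (a b : ℂ) {σ : ℝ} (hσ : 0 < σ)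
    (ha : ∀ i : ℕ, a + i ≠ 0) (hb : ∀ i : ℕ, b + i ≠ 0) {m : ℕ} (hm : 1 ≤ m) :
    W a b σ (m+1) = (m:ℝ) ^ (a.re + b.re - σ) *
      (Real.GammaSeq σ m / (‖Complex.GammaSeq a m‖ * ‖Complex.GammaSeq b m‖)) / (m+1) := by
  have hm0 : (0:ℝ) < m := by exact_mod_cast hm
  have hGa : (0:ℝ) < ‖Complex.GammaSeq a m‖ := by
    rw [norm_gs a hm]
    have := norm_ne_zero_iff.2 (pc_ne_zero ha (m+1))
    have hfac : (0:ℝ) < (m.factorial : ℝ) := by exact_mod_cast m.factorial_pos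
    positivity
  have hGb : (0:ℝ) < ‖Complex.GammaSeq b m‖ := by
    rw [norm_gs b hm]
    have := norm_ne_zero_iff.2 (pc_ne_zero hb (m+1))
    have hfac : (0:ℝ) < (m.factorial : ℝ) := by exact_mod_cast m.factorial_pos
    positivity
  have hGr : (0:ℝ) < Real.GammaSeq σ m := by
    rw [gs_r]
    have := pr_pos hσ (m+1)
    have hfac : (0:ℝ) < (m.factorial : ℝ) := by exact_mod_cast m.factorial_pos
    positivity
  have hfac : (0:ℝ) < (m.factorial : ℝ) := by exact_mod_cast m.factorial_pos
  have e1 := norm_pc_eq a ha hm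
  have e2 := norm_pc_eq b hb hm
  have e3 := pr_eq σ hσ hm
  unfold W
  rw [e1, e2, e3, Nat.factorial_succ]
  have hpow : (m:ℝ) ^ (a.re + b.re - σ) = (m:ℝ) ^ a.re * (m:ℝ) ^ b.re / (m:ℝ) ^ σ := by
    rw [Real.rpow_sub hm0, Real.rpow_add hm0]
  rw [hpow]
  have hma : ((m:ℝ)) ^ a.re ≠ 0 := (Real.rpow_pos_of_pos hm0 _).ne'
  have hmb : ((m:ℝ)) ^ b.re ≠ 0 := (Real.rpow_pos_of_pos hm0 _).ne'
  have hms : ((m:ℝ)) ^ σ ≠ 0 := (Real.rpow_pos_of_pos hm0 _).ne'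
  have hm1 : ((m:ℝ) + 1) ≠ 0 := by positivity
  have hGa' := hGa.ne'
  have hGb' := hGb.ne'
  have hGr' := hGr.ne'
  have hfac' := hfac.ne'
  push_cast
  field_simp


noncomputable def rseq (a b : ℂ) (σ : ℝ) (m : ℕ) : ℝ :=
  Real.GammaSeq σ m / (‖Complex.GammaSeq a m‖ * ‖Complex.GammaSeq b m‖)

lemma rseq_tendsto (a b : ℂ) (σ : ℝ) (ha : ∀ k : ℕ, a ≠ -(k:ℂ)) (hb : ∀ k : ℕ, b ≠ -(k:ℂ)) :
    Tendsto (rseq a b σ) atTop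
      (𝓝 (Real.Gamma σ / (‖Complex.Gamma a‖ * ‖Complex.Gamma b‖))) := by
  have hA : ‖Complex.Gamma a‖ ≠ 0 := norm_ne_zero_iff.2 (Complex.Gamma_ne_zero ha)
  have hB : ‖Complex.Gamma b‖ ≠ 0 := norm_ne_zero_iff.2 (Complex.Gamma_ne_zero hb)
  exact (Real.GammaSeq_tendsto_Gamma σ).div
    (((Complex.GammaSeq_tendsto_Gamma a).norm).mul ((Complex.GammaSeq_tendsto_Gamma b).norm))
    (mul_ne_zero hA hB)

lemma rseq_nonneg (a b : ℂ) {σ : ℝ} (hσ : 0 < σ) (m : ℕ) : 0 ≤ rseq a b σ m := by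
  have h1 : 0 ≤ Real.GammaSeq σ m := by
    rw [gs_r]
    have h2 := (pr_pos hσ (m+1)).le
    have h3 : (0:ℝ) ≤ (m:ℝ) ^ σ := Real.rpow_nonneg (Nat.cast_nonneg m) σ
    positivity
  exact div_nonneg h1 (by positivity)

lemma W_eq' (a b : ℂ) {σ : ℝ} (hσ : 0 < σ)
    (ha : ∀ k : ℕ, a ≠ -(k:ℂ)) (hb : ∀ k : ℕ, b ≠ -(k:ℂ)) {n : ℕ} (hn : 2 ≤ n) :
    W a b σ n = ((n-1:ℕ):ℝ) ^ (a.re + b.re - σ) * rseq a b σ (n-1) / n := by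
  obtain ⟨m, rfl⟩ : ∃ m, n = m + 1 := ⟨n - 1, by omega⟩
  have hm : 1 ≤ m := by omega
  rw [W_eq a b hσ (not_neg_nat_iff.1 ha) (not_neg_nat_iff.1 hb) hm]
  simp only [Nat.add_sub_cancel, rseq]
  push_cast
  ring

lemma W_mul_tendsto (a b : ℂ) {σ : ℝ} (hσ : 0 < σ) (hab : a.re + b.re < σ) :
    Tendsto (fun n : ℕ => (n:ℝ) * W a b σ n) atTop (𝓝 0) := by
  by_cases hdeg : (∃ k : ℕ, a = -(k:ℂ)) ∨ (∃ k : ℕ, b = -(k:ℂ))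
  · have hev : ∀ᶠ n : ℕ in atTop, (n:ℝ) * W a b σ n = 0 := by
      rcases hdeg with h | h
      · filter_upwards [pc_eventually_zero h] with n hn
        simp [W, hn]
      · filter_upwards [pc_eventually_zero h] with n hn
        simp [W, hn]
    exact Tendsto.congr' (hev.mono fun n h => h.symm) tendsto_const_nhds
  · push_neg at hdeg
    obtain ⟨ha, hb⟩ := hdeg
    set L := Real.Gamma σ / (‖Complex.Gamma a‖ * ‖Complex.Gamma b‖)
    have h1 : Tendsto (fun m : ℕ => ((m:ℝ) ^ (a.re + b.re - σ)) * rseq a b σ m) atTop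
        (𝓝 (0 * L)) := by
      refine Tendsto.mul ?_ (rseq_tendsto a b σ ha hb)
      have : Tendsto (fun x : ℝ => x ^ (a.re + b.re - σ)) atTop (𝓝 0) := by
        have := tendsto_rpow_neg_atTop (y := σ - (a.re + b.re)) (by linarith)
        simpa [neg_sub] using this
      exact this.comp tendsto_natCast_atTop_atTop
    rw [zero_mul] at h1
    have h2 : Tendsto (fun n : ℕ =>
        ((n-1:ℕ):ℝ) ^ (a.re + b.re - σ) * rseq a b σ (n-1)) atTop (𝓝 0) :=
      h1.comp (tendsto_sub_atTop_nat 1)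
    refine Tendsto.congr' ?_ h2
    filter_upwards [eventually_ge_atTop 2] with n hn
    rw [W_eq' a b hσ ha hb hn]
    have hn0 : (n:ℝ) ≠ 0 := by positivity
    field_simp

lemma W_summable (a b : ℂ) {σ : ℝ} (hσ : 0 < σ) (hab : a.re + b.re < σ) :
    Summable (W a b σ) := by
  by_cases hdeg : (∃ k : ℕ, a = -(k:ℂ)) ∨ (∃ k : ℕ, b = -(k:ℂ))
  · refine summable_of_eventually_zero ?_
    rcases hdeg with h | h
    · filter_upwards [pc_eventually_zero h] with n hn; simp [W, hn]
    · filter_upwards [pc_eventually_zero h] with n hn; simp [W, hn]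
  · push_neg at hdeg
    obtain ⟨ha, hb⟩ := hdeg
    set L := Real.Gamma σ / (‖Complex.Gamma a‖ * ‖Complex.Gamma b‖) with hL
    set ε := σ - (a.re + b.re) with hε
    have hε0 : 0 < ε := by simp [hε]; linarith
    have hrb : ∀ᶠ m in atTop, rseq a b σ m < |L| + 1 :=
      (rseq_tendsto a b σ ha hb).eventually_lt_const (by
        calc L ≤ |L| := le_abs_self L
        _ < |L| + 1 := by linarith)
    have hbound : ∀ᶠ n in atTop, W a b σ n ≤ (|L|+1) * ((n-1:ℕ):ℝ) ^ (-(1+ε)) := by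
      obtain ⟨N, hN⟩ := eventually_atTop.1 hrb
      filter_upwards [eventually_ge_atTop (max 2 (N+1))] with n hn
      have hn2 : 2 ≤ n := le_trans (le_max_left _ _) hn
      have hmN : N ≤ n - 1 := by
        have := le_trans (le_max_right _ _) hn; omega
      set m := n - 1 with hm
      have hm1 : 1 ≤ m := by omega
      have hm0 : (0:ℝ) < (m:ℝ) := by exact_mod_cast hm1
      rw [W_eq' a b hσ ha hb hn2]
      have hr := (hN m hmN).le
      have hrnn : 0 ≤ rseq a b σ m := rseq_nonneg a b hσ m
      have hmn : (m:ℝ) ≤ (n:ℝ) := by exact_mod_cast Nat.sub_le n 1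
      calc ((m:ℕ):ℝ) ^ (a.re + b.re - σ) * rseq a b σ m / n
          ≤ ((m:ℕ):ℝ) ^ (a.re + b.re - σ) * (|L|+1) / m := by
            apply div_le_div₀ (by positivity) ?_ hm0 hmn
            exact mul_le_mul_of_nonneg_left hr (by positivity)
        _ = (|L|+1) * ((m:ℕ):ℝ) ^ (-(1+ε)) := by
            rw [show -(1+ε) = (a.re + b.re - σ) + (-1 : ℝ) by rw [hε]; ring]
            rw [Real.rpow_add hm0, Real.rpow_neg_one]
            field_simp
    -- comparison
    obtain ⟨N, hN⟩ := eventually_atTop.1 hbound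
    refine (summable_nat_add_iff (N+1)).1 ?_
    have base : Summable (fun m : ℕ => ((m:ℕ):ℝ) ^ (-(1+ε))) :=
      (Real.summable_nat_rpow (p := -(1+ε))).2 (by linarith)
    have hg : Summable (fun n : ℕ => (|L|+1) * (((n + N):ℕ):ℝ) ^ (-(1+ε))) :=
      ((summable_nat_add_iff N).2 base).mul_left _
    refine Summable.of_nonneg_of_le (fun n => W_nonneg a b hσ _) (fun n => ?_) hg
    have h1 := hN (n + (N+1)) (by omega)
    have h2 : n + (N + 1) - 1 = n + N := by omega
    rwa [h2] at h1

end Hyp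

namespace Hyp

noncomputable def T (a b s : ℂ) (k : ℕ) : ℂ :=
  pc a k * pc b k / (pc s k * (k.factorial : ℂ))

lemma T_zero (a b s : ℂ) : T a b s 0 = 1 := by simp [T, pc_zero]

lemma norm_T_le (a b : ℂ) {s : ℂ} (hs : 0 < s.re) (k : ℕ) :
    ‖T a b s k‖ ≤ W a b s.re k := by
  have h1 : pr s.re k ≤ ‖pc s k‖ := norm_pc_ge hs k
  have h2 : (0:ℝ) < pr s.re k := pr_pos hs k
  have hf : (0:ℝ) < (k.factorial : ℝ) := by exact_mod_cast k.factorial_pos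
  have : ‖T a b s k‖ = ‖pc a k‖ * ‖pc b k‖ / (‖pc s k‖ * (k.factorial : ℝ)) := by
    rw [T, norm_div, norm_mul, norm_mul]
    congr 2
    simp
  rw [this, W]
  apply div_le_div_of_nonneg_left (by positivity) (by positivity)
  exact mul_le_mul_of_nonneg_right h1 hf.le

lemma T_summable {a b s : ℂ} (hs : 0 < s.re) (hab : a.re + b.re < s.re) :
    Summable (T a b s) :=
  Summable.of_norm <| Summable.of_nonneg_of_le (fun k => norm_nonneg _)
    (fun k => norm_T_le a b hs k) (W_summable a b hs hab)

noncomputable def G (a b s : ℂ) : ℂ := ∑' k, T a b s k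

lemma natCast_re_add {s : ℂ} (n : ℕ) : (s + (n:ℂ)).re = s.re + n := by simp

lemma contig {a b s : ℂ} (hs : 0 < s.re) (hab : a.re + b.re < s.re) :
    s * (s - a - b) * G a b s = (s - a) * (s - b) * G a b (s + 1) := by
  have hs1 : 0 < (s+1).re := by simp; linarith
  have hab1 : a.re + b.re < (s+1).re := by simp; linarith
  have hsum1 : Summable (T a b s) := T_summable hs hab
  have hsum2 : Summable (T a b (s+1)) := T_summable hs1 hab1
  set u : ℕ → ℂ := fun k => s * k * T a b s k with hu
  have hsne : s ≠ 0 := fun h => by simp [h] at hs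
  have hske : ∀ k : ℕ, s + (k:ℂ) ≠ 0 := by
    intro k h
    have h2 := congrArg Complex.re h
    simp only [add_re, natCast_re, zero_re] at h2
    have h3 : (0:ℝ) ≤ (k:ℝ) := Nat.cast_nonneg k
    linarith
  have hk1 : ∀ k : ℕ, ((k:ℂ)+1) ≠ 0 := by
    intro k
    have : (((k+1:ℕ)):ℂ) ≠ 0 := Nat.cast_ne_zero.2 k.succ_ne_zero
    push_cast at this
    exact this
  have key : ∀ k : ℕ, s * (s - a - b) * T a b s k - (s - a) * (s - b) * T a b (s+1) k
      = u k - u (k+1) := by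
    intro k
    have hp1 : pc (s+1) k ≠ 0 := pc_ne_zero_of_re_pos hs1 k
    have hsk : s + (k:ℂ) ≠ 0 := hske k
    have hk1k : ((k:ℂ)+1) ≠ 0 := hk1 k
    have hps : pc s k ≠ 0 := pc_ne_zero_of_re_pos hs k
    have hfk : ((k.factorial : ℂ)) ≠ 0 := by exact_mod_cast k.factorial_ne_zero
    have h1 : T a b (s+1) k * (s + (k:ℂ)) = T a b s k * s := by
      rw [T, T, div_mul_eq_mul_div, div_mul_eq_mul_div,
        div_eq_div_iff (mul_ne_zero hp1 hfk) (mul_ne_zero hps hfk)]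
      linear_combination (-(pc a k * pc b k * (k.factorial:ℂ))) * pc_shift s k
    have hu1 : s * ((k:ℂ)+1) * T a b s (k+1) * (s+(k:ℂ))
        = s * T a b s k * ((a+(k:ℂ))*(b+(k:ℂ))) := by
      rw [T, T, pc_succ, pc_succ, pc_succ, Nat.factorial_succ]
      push_cast
      field_simp
    rw [hu]
    simp only
    push_cast
    apply mul_right_cancel₀ hsk
    linear_combination (-((s-a)*(s-b))) * h1 + hu1
  have hsum3 : Summable (fun k => u k - u (k+1)) := by
    refine Summable.congr ?_ key
    exact ((hsum1.mul_left _).sub (hsum2.mul_left _))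
  have hu0 : Tendsto u atTop (𝓝 0) := by
    have hb : ∀ k : ℕ, ‖u k‖ ≤ ‖s‖ * ((k:ℝ) * W a b s.re k) := by
      intro k
      rw [hu]
      simp only [norm_mul, Complex.norm_natCast]
      calc ‖s‖ * (k:ℝ) * ‖T a b s k‖ ≤ ‖s‖ * (k:ℝ) * W a b s.re k := by
            apply mul_le_mul_of_nonneg_left (norm_T_le a b hs k) (by positivity)
        _ = ‖s‖ * ((k:ℝ) * W a b s.re k) := by ring
    have hW := (W_mul_tendsto a b hs hab).const_mul ‖s‖
    rw [mul_zero] at hW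
    rw [show (0:ℂ) = 0 from rfl]
    refine tendsto_zero_iff_norm_tendsto_zero.2 ?_
    refine squeeze_zero (fun k => norm_nonneg _) hb hW
  have htel : HasSum (fun k => u k - u (k+1)) 0 := by
    rw [hsum3.hasSum_iff_tendsto_nat]
    have : ∀ n : ℕ, ∑ i ∈ Finset.range n, (u i - u (i+1)) = u 0 - u n := by
      intro n
      exact Finset.sum_range_sub' u n
    simp only [this]
    have hu00 : u 0 = 0 := by simp [hu]
    rw [hu00]
    simpa using hu0.neg
  have hL : HasSum (fun k => s * (s-a-b) * T a b s k - (s-a)*(s-b) * T a b (s+1) k)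
      ((s * (s-a-b)) * G a b s - ((s-a)*(s-b)) * G a b (s+1)) :=
    (hsum1.hasSum.mul_left _).sub (hsum2.hasSum.mul_left _)
  rw [show (fun k => s * (s-a-b) * T a b s k - (s-a)*(s-b) * T a b (s+1) k)
      = (fun k => u k - u (k+1)) from funext key] at hL
  have h0 := hL.unique htel
  linear_combination h0

lemma add_nat_re_pos {s : ℂ} (hs : 0 < s.re) (n : ℕ) : 0 < (s + (n:ℂ)).re := by
  rw [natCast_re_add]
  have : (0:ℝ) ≤ (n:ℝ) := Nat.cast_nonneg n
  linarith

lemma iter {a b s : ℂ} (hs : 0 < s.re) (hab : a.re + b.re < s.re) (n : ℕ) :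
    pc s n * pc (s-a-b) n * G a b s = pc (s-a) n * pc (s-b) n * G a b (s + n) := by
  induction n with
  | zero => simp [pc_zero]
  | succ n ih =>
    have hsn : 0 < (s + (n:ℂ)).re := add_nat_re_pos hs n
    have habn : a.re + b.re < (s + (n:ℂ)).re := by
      rw [natCast_re_add]
      have : (0:ℝ) ≤ (n:ℝ) := Nat.cast_nonneg n
      linarith
    have hcontig := contig (a := a) (b := b) hsn habn
    have e1 : s + (n:ℂ) + 1 = s + ((n+1 : ℕ):ℂ) := by push_cast; ring
    rw [e1] at hcontig
    have e2 : s + (n:ℂ) - a - b = (s - a - b) + (n:ℂ) := by ring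
    have e3 : s + (n:ℂ) - a = (s - a) + (n:ℂ) := by ring
    have e4 : s + (n:ℂ) - b = (s - b) + (n:ℂ) := by ring
    rw [pc_succ, pc_succ, pc_succ, pc_succ]
    calc pc s n * (s + n) * (pc (s-a-b) n * (s - a - b + n)) * G a b s
        = (s + n) * (s - a - b + n) * (pc s n * pc (s-a-b) n * G a b s) := by ring
      _ = (s + n) * (s - a - b + n) * (pc (s-a) n * pc (s-b) n * G a b (s + n)) := by rw [ih]
      _ = (pc (s-a) n * pc (s-b) n) * ((s + n) * (s + n - a - b) * G a b (s + n)) := by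
          rw [← e2]; ring
      _ = (pc (s-a) n * pc (s-b) n) * ((s + n - a) * (s + n - b) * G a b (s + ((n+1:ℕ):ℂ))) := by
          rw [hcontig]
      _ = pc (s-a) n * (s - a + n) * (pc (s-b) n * (s - b + n)) * G a b (s + ((n+1:ℕ):ℂ)) := by
          rw [← e3, ← e4]; ring

lemma pr_lower {σ : ℝ} (hσ : 0 < σ) (n k : ℕ) :
    (σ + n) * pr σ (k+1) ≤ σ * pr (σ + n) (k+1) := by
  have hn : (0:ℝ) ≤ (n:ℝ) := Nat.cast_nonneg n
  rw [pr_prod, pr_prod, Finset.prod_range_succ', Finset.prod_range_succ']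
  simp only [Nat.cast_zero, add_zero]
  have hle : ∏ i ∈ Finset.range k, (σ + (i+1:ℕ)) ≤ ∏ i ∈ Finset.range k, (σ + n + (i+1:ℕ)) := by
    refine Finset.prod_le_prod (fun i _ => by positivity) fun i _ => by
      push_cast; linarith
  calc (σ + n) * ((∏ i ∈ Finset.range k, (σ + (i+1:ℕ))) * σ)
      ≤ (σ + n) * ((∏ i ∈ Finset.range k, (σ + n + (i+1:ℕ))) * σ) := by
        apply mul_le_mul_of_nonneg_left ?_ (by linarith)
        exact mul_le_mul_of_nonneg_right hle hσ.le
    _ = σ * ((∏ i ∈ Finset.range k, (σ + n + (i+1:ℕ))) * (σ + n)) := by ring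

lemma G_tendsto_one {a b s : ℂ} (hs : 0 < s.re) (hab : a.re + b.re < s.re) :
    Tendsto (fun n : ℕ => G a b (s + n)) atTop (𝓝 1) := by
  set σ := s.re with hσdef
  have hσ : 0 < σ := hs
  have hWs : Summable (W a b σ) := W_summable a b hσ hab
  have hWs1 : Summable (fun k => W a b σ (k+1)) := (summable_nat_add_iff 1).2 hWs
  set M := ∑' k, W a b σ (k+1) with hM
  have hMnn : 0 ≤ M := tsum_nonneg fun k => W_nonneg a b hσ _
  have key : ∀ n : ℕ, ‖G a b (s + n) - 1‖ ≤ σ * M / (σ + n) := by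
    intro n
    have hsn : 0 < (s + (n:ℂ)).re := add_nat_re_pos hs n
    have habn : a.re + b.re < (s + (n:ℂ)).re := by
      rw [natCast_re_add]; have : (0:ℝ) ≤ (n:ℝ) := Nat.cast_nonneg n; linarith
    have hsum : Summable (T a b (s + n)) := T_summable hsn habn
    have hG : G a b (s + n) = 1 + ∑' k, T a b (s + n) (k+1) := by
      rw [G, Summable.tsum_eq_zero_add hsum, T_zero]
    rw [hG]
    simp only [add_sub_cancel_left]
    have hbd : ∀ k : ℕ, ‖T a b (s + n) (k+1)‖ ≤ (σ / (σ + n)) * W a b σ (k+1) := by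
      intro k
      have h0 : (0:ℝ) < σ + n := by
        have : (0:ℝ) ≤ (n:ℝ) := Nat.cast_nonneg n; linarith
      have h1 : pr (σ + n) (k+1) ≤ ‖pc (s + n) (k+1)‖ := by
        have := norm_pc_ge (z := s + n) hsn (k+1)
        rwa [natCast_re_add] at this
      have h2 : (σ + n) / σ * pr σ (k+1) ≤ pr (σ + n) (k+1) := by
        have := pr_lower hσ n k
        rw [div_mul_eq_mul_div, div_le_iff₀ hσ]
        linarith
      have h3 : (0:ℝ) < pr σ (k+1) := pr_pos hσ _
      have h4 : (0:ℝ) < (σ + n) / σ * pr σ (k+1) := by positivity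
      have hfk : (0:ℝ) < ((k+1).factorial : ℝ) := by exact_mod_cast (k+1).factorial_pos
      have hTnorm : ‖T a b (s+n) (k+1)‖
          = ‖pc a (k+1)‖ * ‖pc b (k+1)‖ / (‖pc (s+n) (k+1)‖ * ((k+1).factorial : ℝ)) := by
        rw [T, norm_div, norm_mul, norm_mul]
        congr 2
        simp
      rw [hTnorm]
      have h5 : (σ + n) / σ * pr σ (k+1) ≤ ‖pc (s+n) (k+1)‖ := le_trans h2 h1
      calc ‖pc a (k+1)‖ * ‖pc b (k+1)‖ / (‖pc (s+n) (k+1)‖ * ((k+1).factorial : ℝ))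
          ≤ ‖pc a (k+1)‖ * ‖pc b (k+1)‖ / (((σ + n) / σ * pr σ (k+1)) * ((k+1).factorial : ℝ)) := by
            apply div_le_div_of_nonneg_left (by positivity) (by positivity)
            exact mul_le_mul_of_nonneg_right h5 hfk.le
        _ = (σ / (σ + n)) * W a b σ (k+1) := by
            rw [W]
            field_simp
    calc ‖∑' k, T a b (s + n) (k+1)‖
        ≤ ∑' k, ((σ / (σ + n)) * W a b σ (k+1)) := by
          have hsn' : Summable (fun k => ‖T a b (s + n) (k+1)‖) := by
            refine Summable.of_nonneg_of_le (fun k => norm_nonneg _) hbd (hWs1.mul_left _)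
          exact (norm_tsum_le_tsum_norm hsn').trans (Summable.tsum_le_tsum hbd hsn' (hWs1.mul_left _))
        _ = σ * M / (σ + n) := by
          rw [tsum_mul_left, hM]
          ring
  have hlim : Tendsto (fun n : ℕ => σ * M / (σ + n)) atTop (𝓝 0) := by
    apply Tendsto.div_atTop (tendsto_const_nhds)
    exact tendsto_atTop_add_const_left _ σ tendsto_natCast_atTop_atTop
  rw [show (1:ℂ) = 1 from rfl]
  have := squeeze_zero (fun n => norm_nonneg _) key hlim
  rw [tendsto_iff_norm_sub_tendsto_zero]
  simpa using this

theorem gauss {a b s : ℂ} (hs : 0 < s.re) (hab : 0 < (s - a - b).re) :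
    G a b s = Complex.Gamma s * Complex.Gamma (s-a-b)
      / (Complex.Gamma (s-a) * Complex.Gamma (s-b)) := by
  have hab' : a.re + b.re < s.re := by
    simp only [sub_re] at hab; linarith
  have hsab : 0 < (s - a - b).re := hab
  by_cases hdeg : (∃ k : ℕ, s - a = -(k:ℂ)) ∨ (∃ k : ℕ, s - b = -(k:ℂ))
  · -- degenerate case: RHS has Gamma zero in the denominator, and G = 0
    have hzero : Complex.Gamma (s-a) * Complex.Gamma (s-b) = 0 := by
      rcases hdeg with ⟨k, hk⟩ | ⟨k, hk⟩
      · rw [(Complex.Gamma_eq_zero_iff _).2 ⟨k, hk⟩, zero_mul]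
      · rw [(Complex.Gamma_eq_zero_iff _).2 ⟨k, hk⟩, mul_zero]
    rw [hzero, div_zero]
    -- show G a b s = 0 using iter
    rcases hdeg with ⟨k, hk⟩ | ⟨k, hk⟩
    · have hpz : pc (s-a) (k+1) = 0 := by
        rw [pc_prod]
        exact Finset.prod_eq_zero (i := k) (Finset.mem_range.2 (by omega)) (by rw [hk]; ring)
      have h := iter hs hab' (k+1)
      rw [hpz, zero_mul, zero_mul] at h
      have h1 : pc s (k+1) ≠ 0 := pc_ne_zero_of_re_pos hs _
      have h2 : pc (s-a-b) (k+1) ≠ 0 := pc_ne_zero_of_re_pos hsab _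
      have := mul_eq_zero.1 h
      rcases this with h3 | h3
      · exact (mul_ne_zero h1 h2 h3).elim
      · exact h3
    · have hpz : pc (s-b) (k+1) = 0 := by
        rw [pc_prod]
        exact Finset.prod_eq_zero (i := k) (Finset.mem_range.2 (by omega)) (by rw [hk]; ring)
      have h := iter hs hab' (k+1)
      rw [hpz, mul_comm (pc (s-a) (k+1)), zero_mul, zero_mul] at h
      have h1 : pc s (k+1) ≠ 0 := pc_ne_zero_of_re_pos hs _
      have h2 : pc (s-a-b) (k+1) ≠ 0 := pc_ne_zero_of_re_pos hsab _
      rcases mul_eq_zero.1 h with h3 | h3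
      · exact (mul_ne_zero h1 h2 h3).elim
      · exact h3
  · push_neg at hdeg
    obtain ⟨hsa, hsb⟩ := hdeg
    have hsa' : ∀ i : ℕ, (s - a) + i ≠ 0 := not_neg_nat_iff.1 hsa
    have hsb' : ∀ i : ℕ, (s - b) + i ≠ 0 := not_neg_nat_iff.1 hsb
    -- Q n := quotient
    set Q : ℕ → ℂ := fun n =>
      pc (s-a) n * pc (s-b) n / (pc s n * pc (s-a-b) n) with hQ
    have hGQ : ∀ n : ℕ, G a b s = Q n * G a b (s + n) := by
      intro n
      have h1 : pc s n ≠ 0 := pc_ne_zero_of_re_pos hs _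
      have h2 : pc (s-a-b) n ≠ 0 := pc_ne_zero_of_re_pos hsab _
      have h := iter hs hab' n
      rw [hQ]
      field_simp
      linear_combination h
    -- Q in terms of GammaSeq
    have hQGS : ∀ m : ℕ, 1 ≤ m → Q (m+1) =
        Complex.GammaSeq s m * Complex.GammaSeq (s-a-b) m
          / (Complex.GammaSeq (s-a) m * Complex.GammaSeq (s-b) m) := by
      intro m hm
      have hm0 : ((m:ℂ)) ≠ 0 := Nat.cast_ne_zero.2 (by omega)
      have hfk : ((m.factorial : ℂ)) ≠ 0 := by exact_mod_cast m.factorial_ne_zero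
      have hmz : ∀ z : ℂ, (m:ℂ) ^ z ≠ 0 := fun z => by
        intro h
        exact hm0 (Complex.cpow_eq_zero_iff _ _ |>.1 h).1
      have h1 : pc s (m+1) ≠ 0 := pc_ne_zero_of_re_pos hs _
      have h2 : pc (s-a-b) (m+1) ≠ 0 := pc_ne_zero_of_re_pos hsab _
      have h3 : pc (s-a) (m+1) ≠ 0 := pc_ne_zero hsa' _
      have h4 : pc (s-b) (m+1) ≠ 0 := pc_ne_zero hsb' _
      have hX : (m:ℂ)^s * (m:ℂ)^(s-a-b) = (m:ℂ)^(s-a) * (m:ℂ)^(s-b) := by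
        rw [← Complex.cpow_add _ _ hm0, ← Complex.cpow_add _ _ hm0]
        congr 1
        ring
      have hX2 : (m:ℂ)^s * (m.factorial:ℂ) * ((m:ℂ)^(s-a-b) * (m.factorial:ℂ))
          = (m:ℂ)^(s-a) * (m.factorial:ℂ) * ((m:ℂ)^(s-b) * (m.factorial:ℂ)) := by
        linear_combination ((m.factorial:ℂ))^2 * hX
      have hne34 : ((m:ℂ)^(s-a) * (m.factorial:ℂ)) * ((m:ℂ)^(s-b) * (m.factorial:ℂ)) ≠ 0 :=
        mul_ne_zero (mul_ne_zero (hmz _) hfk) (mul_ne_zero (hmz _) hfk)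
      rw [hQ, gs_c, gs_c, gs_c, gs_c]
      simp only
      rw [div_mul_div_comm, div_mul_div_comm, div_div_div_comm, hX2, div_self hne34,
        one_div_div]
    -- limit of the GammaSeq quotient
    have hne : Complex.Gamma (s-a) * Complex.Gamma (s-b) ≠ 0 :=
      mul_ne_zero (Complex.Gamma_ne_zero hsa) (Complex.Gamma_ne_zero hsb)
    have hlim1 : Tendsto (fun m : ℕ =>
        Complex.GammaSeq s m * Complex.GammaSeq (s-a-b) m
          / (Complex.GammaSeq (s-a) m * Complex.GammaSeq (s-b) m)) atTop
        (𝓝 (Complex.Gamma s * Complex.Gamma (s-a-b)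
          / (Complex.Gamma (s-a) * Complex.Gamma (s-b)))) :=
      ((Complex.GammaSeq_tendsto_Gamma s).mul (Complex.GammaSeq_tendsto_Gamma (s-a-b))).div
        (((Complex.GammaSeq_tendsto_Gamma (s-a)).mul (Complex.GammaSeq_tendsto_Gamma (s-b)))) hne
    -- combine with G (s+n) → 1
    have hG1 := G_tendsto_one hs hab'
    have hfinal : Tendsto (fun n : ℕ => Q n * G a b (s + n)) atTop
        (𝓝 (Complex.Gamma s * Complex.Gamma (s-a-b)
          / (Complex.Gamma (s-a) * Complex.Gamma (s-b)) * 1)) := by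
      have hQlim : Tendsto Q atTop (𝓝 (Complex.Gamma s * Complex.Gamma (s-a-b)
          / (Complex.Gamma (s-a) * Complex.Gamma (s-b)))) := by
        have hshift : Tendsto (fun n : ℕ => Q (n+2)) atTop (𝓝 (Complex.Gamma s *
            Complex.Gamma (s-a-b) / (Complex.Gamma (s-a) * Complex.Gamma (s-b)))) := by
          have h2 : Tendsto (fun n : ℕ =>
              Complex.GammaSeq s (n+1) * Complex.GammaSeq (s-a-b) (n+1)
              / (Complex.GammaSeq (s-a) (n+1) * Complex.GammaSeq (s-b) (n+1))) atTop
              (𝓝 (Complex.Gamma s * Complex.Gamma (s-a-b)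
              / (Complex.Gamma (s-a) * Complex.Gamma (s-b)))) :=
            hlim1.comp (tendsto_add_atTop_nat 1)
          refine h2.congr fun n => ?_
          rw [hQGS (n+1) (by omega)]
        exact (tendsto_add_atTop_iff_nat 2).1 hshift
      exact hQlim.mul hG1
    rw [mul_one] at hfinal
    have hconst : Tendsto (fun _ : ℕ => G a b s) atTop (𝓝 (G a b s)) := tendsto_const_nhds
    have := tendsto_nhds_unique (hconst.congr (fun n => hGQ n)) hfinal
    exact this

end Hyp

namespace Hyp

lemma hyp2F1_eq (a b c z : ℂ) : hyp2F1 a b c z = ∑' k, T a b c k * z ^ k := rfl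

/-- real Beta integral -/
lemma realBeta {u v : ℝ} (hu : 0 < u) (hv : 0 < v) :
    (∫ t in Set.Ioc (0:ℝ) 1, t ^ (u-1) * (1-t) ^ (v-1)) =
      Real.Gamma u * Real.Gamma v / Real.Gamma (u+v) := by
  have h1 : Complex.betaIntegral u v =
      ((∫ t in Set.Ioc (0:ℝ) 1, t ^ (u-1) * (1-t) ^ (v-1) : ℝ) : ℂ) := by
    rw [Complex.betaIntegral, intervalIntegral.integral_of_le zero_le_one,
      MeasureTheory.integral_Ioc_eq_integral_Ioo, MeasureTheory.integral_Ioc_eq_integral_Ioo]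
    calc ∫ t in Set.Ioo (0:ℝ) 1, (t:ℂ) ^ ((u:ℂ)-1) * (1-(t:ℂ)) ^ ((v:ℂ)-1)
        = ∫ t in Set.Ioo (0:ℝ) 1, ((t ^ (u-1) * (1-t) ^ (v-1) : ℝ) : ℂ) := by
          refine MeasureTheory.setIntegral_congr_fun measurableSet_Ioo fun t ht => ?_
          obtain ⟨ht0, ht1⟩ := ht
          rw [Complex.ofReal_mul, Complex.ofReal_cpow ht0.le, Complex.ofReal_cpow (by linarith)]
          push_cast
          ring
      _ = ((∫ t in Set.Ioo (0:ℝ) 1, t ^ (u-1) * (1-t) ^ (v-1) : ℝ) : ℂ) := integral_ofReal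
  have h2 : Complex.Gamma (u+v : ℝ) ≠ 0 := by
    apply Complex.Gamma_ne_zero_of_re_pos
    simp only [Complex.ofReal_re]
    · positivity
  have h3 := Complex.Gamma_mul_Gamma_eq_betaIntegral
    (s := (u:ℂ)) (t := (v:ℂ)) (by simpa using hu) (by simpa using hv)
  rw [h1] at h3
  have h4 : ((u:ℂ) + v) = ((u + v : ℝ) : ℂ) := by push_cast; ring
  rw [h4] at h3
  rw [Complex.Gamma_ofReal, Complex.Gamma_ofReal, Complex.Gamma_ofReal] at h3
  have h5 : ((Real.Gamma u * Real.Gamma v : ℝ) : ℂ)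
      = ((Real.Gamma (u+v) * ∫ t in Set.Ioc (0:ℝ) 1, t ^ (u-1) * (1-t) ^ (v-1) : ℝ) : ℂ) := by
    push_cast
    exact h3
  have h6 := Complex.ofReal_inj.1 h5
  have h7 : Real.Gamma (u+v) ≠ 0 := by
    apply Real.Gamma_ne_zero
    intro m h
    have : (0:ℝ) ≤ (m:ℝ) := Nat.cast_nonneg m
    nlinarith
  rw [eq_div_iff h7]
  linear_combination -h6

end Hyp

namespace Hyp

lemma natCast_re_add' {s : ℂ} (n : ℕ) : (s + (n:ℂ)).re = s.re + n := by simp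

lemma add_nat_re_pos' {s : ℂ} (hs : 0 < s.re) (n : ℕ) : 0 < (s + (n:ℂ)).re := by
  rw [natCast_re_add']
  have : (0:ℝ) ≤ (n:ℝ) := Nat.cast_nonneg n
  linarith

section main
variable {a b c d : ℂ}

lemma f_integrable (hc : 0 < c.re) (hd : 0 < d.re) (k : ℕ) :
    MeasureTheory.IntegrableOn
      (fun t : ℝ => T a b c k * ((t:ℂ) ^ (c + k - 1) * (1 - (t:ℂ)) ^ (d-1)))
      (Set.Ioc 0 1) := by
  have h := (Complex.betaIntegral_convergent (u := c + k) (v := d)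
    (add_nat_re_pos' hc k) hd)
  rw [intervalIntegrable_iff_integrableOn_Ioc_of_le zero_le_one] at h
  exact h.const_mul _

lemma norm_integral_f (hc : 0 < c.re) (hd : 0 < d.re) (k : ℕ) :
    ∫ t in Set.Ioc (0:ℝ) 1, ‖T a b c k * ((t:ℂ) ^ (c + k - 1) * (1 - (t:ℂ)) ^ (d-1))‖ =
      ‖T a b c k‖ * (Real.Gamma (c.re + k) * Real.Gamma d.re
        / Real.Gamma ((c.re + k) + d.re)) := by
  have h1 : ∀ t : ℝ, ‖T a b c k * ((t:ℂ) ^ (c + k - 1) * (1 - (t:ℂ)) ^ (d-1))‖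
      = ‖T a b c k‖ * ‖(t:ℂ) ^ (c + k - 1) * (1 - (t:ℂ)) ^ (d-1)‖ := fun t => norm_mul _ _
  simp only [h1]
  rw [MeasureTheory.integral_const_mul]
  congr 1
  rw [MeasureTheory.integral_Ioc_eq_integral_Ioo, ← realBeta (by positivity : 0 < c.re + k) hd,
    MeasureTheory.integral_Ioc_eq_integral_Ioo]
  refine MeasureTheory.setIntegral_congr_fun measurableSet_Ioo fun t ht => ?_
  obtain ⟨ht0, ht1⟩ := ht
  rw [norm_mul]
  rw [Complex.norm_cpow_eq_rpow_re_of_pos ht0,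
    show (1 - (t:ℂ)) = (((1-t:ℝ)):ℂ) from by push_cast; ring,
    Complex.norm_cpow_eq_rpow_re_of_pos (by linarith)]
  congr 2
  all_goals simp

lemma sum_norm_integral (hc : 0 < c.re) (hd : 0 < d.re)
    (habcd : 0 < (c + d - a - b).re) :
    Summable (fun k => ∫ t in Set.Ioc (0:ℝ) 1,
      ‖T a b c k * ((t:ℂ) ^ (c + k - 1) * (1 - (t:ℂ)) ^ (d-1))‖) := by
  have hσδ : 0 < c.re + d.re := by positivity
  have hab : a.re + b.re < c.re + d.re := by
    simp only [sub_re, add_re] at habcd; linarith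
  set C := Real.Gamma c.re * Real.Gamma d.re / Real.Gamma (c.re + d.re) with hC
  have hW := (W_summable a b hσδ hab).mul_left C
  refine Summable.of_nonneg_of_le
    (fun k => MeasureTheory.integral_nonneg fun t => norm_nonneg _) (fun k => ?_) hW
  rw [norm_integral_f hc hd k]
  -- bound ‖T k‖ * B k ≤ C * W (σ+δ) k
  have hB : Real.Gamma (c.re + k) * Real.Gamma d.re / Real.Gamma ((c.re + k) + d.re)
      = pr c.re k * Real.Gamma c.re * Real.Gamma d.re
        / (pr (c.re + d.re) k * Real.Gamma (c.re + d.re)) := by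
    rw [Gamma_add_nat_r hc k, show (c.re + k) + d.re = (c.re + d.re) + k from by ring,
      Gamma_add_nat_r hσδ k]
  rw [hB]
  have hT := norm_T_le a b hc k
  have hprc : 0 < pr c.re k := pr_pos hc k
  have hprcd : 0 < pr (c.re + d.re) k := pr_pos hσδ k
  have hGcd : 0 < Real.Gamma (c.re + d.re) := Real.Gamma_pos_of_pos hσδ
  have hGc : 0 < Real.Gamma c.re := Real.Gamma_pos_of_pos hc
  have hGd : 0 < Real.Gamma d.re := Real.Gamma_pos_of_pos hd
  have hfk : (0:ℝ) < (k.factorial : ℝ) := by exact_mod_cast k.factorial_pos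
  have hWk : W a b c.re k * (pr c.re k * Real.Gamma c.re * Real.Gamma d.re
        / (pr (c.re + d.re) k * Real.Gamma (c.re + d.re)))
      = C * W a b (c.re + d.re) k := by
    rw [W, W, hC]
    field_simp
  rw [← hWk]
  apply mul_le_mul_of_nonneg_right hT (by positivity)

end main
end Hyp

/-- For `Re c > 0`, `Re d > 0`, `Re (c+d-a-b) > 0`:
`∫₀¹ t^(c-1) (1-t)^(d-1) ₂F₁(a,b;c;t) dt = Γ(c)Γ(d)Γ(c+d-a-b)/(Γ(c+d-a)Γ(c+d-b))`. -/
theorem integral_hyp2F1 (a b c d : ℂ) (hc : 0 < c.re) (hd : 0 < d.re)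
    (habcd : 0 < (c + d - a - b).re) :
    ∫ t in (0:ℝ)..1, (t : ℂ) ^ (c - 1) * ((1 : ℂ) - t) ^ (d - 1) * hyp2F1 a b c t =
      Complex.Gamma c * Complex.Gamma d * Complex.Gamma (c + d - a - b) /
        (Complex.Gamma (c + d - a) * Complex.Gamma (c + d - b)) := by

  classical
  set f : ℕ → ℝ → ℂ :=
    fun k t => Hyp.T a b c k * ((t:ℂ) ^ (c + k - 1) * (1 - (t:ℂ)) ^ (d-1)) with hf
  have hscd : 0 < (c + d).re := by simp only [Complex.add_re]; positivity
  have hGcd : Complex.Gamma (c + d) ≠ 0 := Complex.Gamma_ne_zero_of_re_pos hscd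
  -- step 1: pointwise identity on Ioc
  have hpt : Set.EqOn (fun t : ℝ => (t : ℂ) ^ (c - 1) * ((1 : ℂ) - t) ^ (d - 1) * hyp2F1 a b c t)
      (fun t : ℝ => ∑' k, f k t) (Set.Ioc 0 1) := by
    intro t ht
    obtain ⟨ht0, ht1⟩ := ht
    have htne : ((t:ℝ):ℂ) ≠ 0 := by
      simpa using ne_of_gt ht0
    simp only [hf]
    rw [Hyp.hyp2F1_eq, mul_assoc, ← tsum_mul_left, ← tsum_mul_left]
    refine tsum_congr fun k => ?_
    have e1 : (t:ℂ) ^ (c + k - 1) = (t:ℂ) ^ (c - 1) * (t:ℂ) ^ (k:ℕ) := by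
      rw [← Complex.cpow_natCast, ← Complex.cpow_add _ _ htne]
      congr 1
      ring
    rw [e1]
    ring
  rw [intervalIntegral.integral_of_le zero_le_one,
    MeasureTheory.setIntegral_congr_fun measurableSet_Ioc hpt,
    ← MeasureTheory.integral_tsum_of_summable_integral_norm
      (fun k => Hyp.f_integrable hc hd k)
      (Hyp.sum_norm_integral hc hd habcd)]
  -- step 2: evaluate each integral
  have hval : ∀ k : ℕ, (∫ t in Set.Ioc (0:ℝ) 1, f k t)
      = (Complex.Gamma c * Complex.Gamma d / Complex.Gamma (c + d)) *
        Hyp.T a b (c + d) k := by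
    intro k
    have hbeta : (∫ t in Set.Ioc (0:ℝ) 1, f k t)
        = Hyp.T a b c k * Complex.betaIntegral (c + k) d := by
      simp only [hf]
      rw [MeasureTheory.integral_const_mul]
      congr 1
      rw [Complex.betaIntegral, intervalIntegral.integral_of_le zero_le_one]
    rw [hbeta]
    have hck : 0 < (c + (k:ℂ)).re := Hyp.add_nat_re_pos' hc k
    have hckd : Complex.Gamma (c + k + d) ≠ 0 := by
      apply Complex.Gamma_ne_zero_of_re_pos
      simp only [Complex.add_re]
      have := Hyp.natCast_re_add' (s := c) k
      rw [Complex.add_re] at this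
      positivity
    have hB := Complex.Gamma_mul_Gamma_eq_betaIntegral hck hd
    have hBval : Complex.betaIntegral (c + k) d
        = Complex.Gamma (c + k) * Complex.Gamma d / Complex.Gamma (c + k + d) := by
      rw [eq_div_iff hckd]
      linear_combination -hB
    rw [hBval, Hyp.Gamma_add_nat_c hc k,
      show c + (k:ℂ) + d = (c + d) + (k:ℂ) from by ring,
      Hyp.Gamma_add_nat_c hscd k]
    rw [Hyp.T, Hyp.T]
    have h1 : Hyp.pc c k ≠ 0 := Hyp.pc_ne_zero_of_re_pos hc k
    have h2 : Hyp.pc (c+d) k ≠ 0 := Hyp.pc_ne_zero_of_re_pos hscd k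
    have h3 : ((k.factorial : ℂ)) ≠ 0 := by exact_mod_cast k.factorial_ne_zero
    field_simp
  rw [tsum_congr hval]
  rw [tsum_mul_left]
  have hG : (∑' k, Hyp.T a b (c+d) k) = Complex.Gamma (c+d) * Complex.Gamma (c+d-a-b)
      / (Complex.Gamma (c+d-a) * Complex.Gamma (c+d-b)) := Hyp.gauss hscd habcd
  rw [hG, div_mul_div_comm,
    show Complex.Gamma c * Complex.Gamma d * (Complex.Gamma (c+d) * Complex.Gamma (c+d-a-b))
      = Complex.Gamma (c+d) * (Complex.Gamma c * Complex.Gamma d * Complex.Gamma (c+d-a-b))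
      from by ring,
    show Complex.Gamma (c+d) * (Complex.Gamma (c+d-a) * Complex.Gamma (c+d-b))
      = Complex.Gamma (c+d) * (Complex.Gamma (c+d-a) * Complex.Gamma (c+d-b)) from rfl,
    mul_div_mul_left _ _ hGcd]
end
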